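/- arXiv:1505.06183 — 4 statements merged into one kernel-verified Lean document; each statement's English description precedes it below -/
import Mathlib

section
/- Let n ∈ ℕ, γ ∈ (0,1) with n > 2γ, α = 1 + 2γ, and let ψ(ρ) = d₂ ρ^{-γ} K_γ(ρ) for ρ > 0, where d₂ = 2 Γ((n+2γ)/2)^{(n-2γ)/(4γ)} / Γ((n-2γ)/2)^{(n+2γ)/(4γ)}. Then for every η > 4γ + 1: ((η+1)/2 - α) ∫_0^∞ ψ'(ρ)² ρ^η dρ = ((η+1)/2) ∫_0^∞ ψ(ρ)² ρ^η dρ, and ∫_0^∞ ψ(ρ)² ρ^η dρ = (η - α)((η-1)/2) [1 + ((η+1)/2)((η+1)/2 - α)^{-1}]^{-1} ∫_0^∞ ψ(ρ)² ρ^{η-2} dρ (note (η+1)/2 - α > 0, so the expressions are well defined, and all four integrals are finite). -/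
open MeasureTheory Real Filter Topology

noncomputable section

/-- The modified Bessel function of the second kind `K_γ`. -/
def besselK (γ t : ℝ) : ℝ :=
  ∫ s in Set.Ioi (0 : ℝ), Real.exp (-t * Real.cosh s) * Real.cosh (γ * s)

/-- The constant `d₂`. -/
def dTwo (n : ℕ) (γ : ℝ) : ℝ :=
  2 * Real.Gamma (((n : ℝ) + 2 * γ) / 2) ^ (((n : ℝ) - 2 * γ) / (4 * γ)) /
    Real.Gamma (((n : ℝ) - 2 * γ) / 2) ^ (((n : ℝ) + 2 * γ) / (4 * γ))

/-- The function `ψ(ρ) = d₂ ρ^{-γ} K_γ(ρ)`. -/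
def psiK (n : ℕ) (γ : ℝ) : ℝ → ℝ := fun ρ => dTwo n γ * ρ ^ (-γ) * besselK γ ρ

section AUX
open Set

lemma sq_div_four_le_exp {x : ℝ} (hx : 0 ≤ x) : x ^ 2 / 4 ≤ Real.exp x := by
  have h1 : x / 2 + 1 ≤ Real.exp (x / 2) := Real.add_one_le_exp (x / 2)
  have h2 : Real.exp x = Real.exp (x / 2) ^ 2 := by
    rw [← Real.exp_nat_mul]; norm_num; ring_nf
  nlinarith [Real.exp_pos (x / 2)]

lemma exp_decay_aux {a : ℝ} (c : ℝ) (ha : 0 < a) {s : ℝ} (hs : 0 ≤ s) :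
    Real.exp (c * s - a * Real.exp s) ≤ Real.exp ((c + 1) ^ 2 / a) * Real.exp (-s) := by
  rw [← Real.exp_add]
  apply Real.exp_le_exp.2
  have h1 : s ^ 2 / 4 ≤ Real.exp s := sq_div_four_le_exp hs
  have h2 : (c + 1) * s - a * (s ^ 2 / 4) ≤ (c + 1) ^ 2 / a := by
    rw [le_div_iff₀ ha]
    nlinarith [sq_nonneg (a * s - 2 * (c + 1))]
  nlinarith [mul_le_mul_of_nonneg_left h1 ha.le]

lemma integrableOn_exp_mul_sub_exp {a : ℝ} (c : ℝ) (ha : 0 < a) :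
    IntegrableOn (fun s => Real.exp (c * s - a * Real.exp s)) (Ioi (0:ℝ)) := by
  apply Integrable.mono' ((exp_neg_integrableOn_Ioi 0 one_pos).const_mul
    (Real.exp ((c + 1) ^ 2 / a)))
  · exact (Real.continuous_exp.comp (by continuity)).aestronglyMeasurable.restrict
  · filter_upwards [ae_restrict_mem measurableSet_Ioi] with s hs
    rw [Real.norm_eq_abs, abs_of_pos (Real.exp_pos _)]
    simpa [neg_one_mul] using exp_decay_aux c ha (le_of_lt hs)

section FTC
open Set

lemma integral_Ioi_zero_eq_sub {F F' : ℝ → ℝ} {L : ℝ}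
    (hderiv : ∀ x ∈ Ioi (0:ℝ), HasDerivAt F (F' x) x)
    (hint : IntegrableOn F' (Ioi (0:ℝ)))
    (h0 : Tendsto F (𝓝[>] (0:ℝ)) (𝓝 L))
    (hinf : Tendsto F atTop (𝓝 (0:ℝ))) :
    ∫ x in Ioi (0:ℝ), F' x = - L := by
  have key : ∀ a ∈ Ioi (0:ℝ), ∫ x in Ioi a, F' x = 0 - F a := by
    intro a ha
    refine integral_Ioi_of_hasDerivAt_of_tendsto
      ((hderiv a ha).continuousAt.continuousWithinAt)
      (fun x hx => hderiv x (mem_Ioi.2 (lt_trans ha hx)))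
      (hint.mono_set (Ioi_subset_Ioi (le_of_lt ha))) hinf
  have h1 : Tendsto (fun a => ∫ x in Ioi a, F' x) (𝓝[>] (0:ℝ))
      (𝓝 (∫ x in Ioi (0:ℝ), F' x)) := by
    have hind : ∀ a ∈ Ioi (0:ℝ), (∫ x in Ioi (0:ℝ), (Ioi a).indicator F' x) = ∫ x in Ioi a, F' x := by
      intro a ha
      rw [setIntegral_indicator measurableSet_Ioi]
      congr 1
      rw [Set.Ioi_inter_Ioi, max_eq_right (le_of_lt ha)]
    have h2 : Tendsto (fun a => ∫ x in Ioi (0:ℝ), (Ioi a).indicator F' x) (𝓝[>] (0:ℝ))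
        (𝓝 (∫ x in Ioi (0:ℝ), F' x)) := by
      apply tendsto_integral_filter_of_dominated_convergence (fun x => ‖F' x‖)
      · exact Eventually.of_forall fun a =>
          (hint.1.indicator measurableSet_Ioi)
      · exact Eventually.of_forall fun a => ae_of_all _ fun x =>
          norm_indicator_le_norm_self F' x
      · exact hint.norm
      · filter_upwards [ae_restrict_mem measurableSet_Ioi] with x hx
        have : ∀ᶠ a in 𝓝[>] (0:ℝ), (Ioi a).indicator F' x = F' x := by
          filter_upwards [Ioo_mem_nhdsGT hx] with a ha
          exact Set.indicator_of_mem (ha.2) F'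
        exact Tendsto.congr' (this.mono fun a h => h.symm) tendsto_const_nhds
    exact h2.congr' (by filter_upwards [self_mem_nhdsWithin] with a ha using hind a ha)
  have h3 : Tendsto (fun a => 0 - F a) (𝓝[>] (0:ℝ)) (𝓝 (0 - L)) :=
    tendsto_const_nhds.sub h0
  have := tendsto_nhds_unique
    (h1.congr' (by filter_upwards [self_mem_nhdsWithin] with a ha using key a ha)) h3
  simpa using this

end FTC

section KK
open Set Real

/-- The `m`-th moment-type Bessel integral. -/
noncomputable def KK (γ : ℝ) (m : ℕ) (ρ : ℝ) : ℝ :=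
  ∫ s in Ioi (0:ℝ), Real.exp (-ρ * Real.cosh s) * Real.cosh s ^ m * Real.cosh (γ * s)

lemma cosh_le_exp' {s : ℝ} (hs : 0 ≤ s) : Real.cosh s ≤ Real.exp s := by
  rw [Real.cosh_eq]
  have := Real.exp_le_exp.2 (neg_le_self hs)
  linarith [Real.exp_pos s]

lemma half_exp_le_cosh (s : ℝ) : Real.exp s / 2 ≤ Real.cosh s := by
  rw [Real.cosh_eq]; linarith [Real.exp_pos (-s)]

lemma abs_sinh_le_cosh (s : ℝ) : |Real.sinh s| ≤ Real.cosh s := by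
  rw [abs_le, Real.sinh_eq, Real.cosh_eq]
  constructor <;> nlinarith [Real.exp_pos s, Real.exp_pos (-s)]

lemma KK_integrand_nonneg (γ : ℝ) (m : ℕ) (ρ s : ℝ) :
    0 ≤ Real.exp (-ρ * Real.cosh s) * Real.cosh s ^ m * Real.cosh (γ * s) := by
  positivity

lemma KK_integrand_bound {γ ρ : ℝ} (hγ : 0 < γ) (hρ : 0 < ρ) (m : ℕ) {s : ℝ} (hs : 0 ≤ s) :
    Real.exp (-ρ * Real.cosh s) * Real.cosh s ^ m * Real.cosh (γ * s)
      ≤ Real.exp (-(ρ/2)) * Real.exp (((m : ℝ) + γ) * s - ρ/4 * Real.exp s) := by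
  have h1 : Real.exp (-ρ * Real.cosh s) ≤ Real.exp (-(ρ/2) + (- (ρ/4 * Real.exp s))) := by
    apply Real.exp_le_exp.2
    have := half_exp_le_cosh s
    have := Real.one_le_cosh s
    nlinarith
  have h2 : Real.cosh s ^ m ≤ Real.exp ((m : ℝ) * s) := by
    calc Real.cosh s ^ m ≤ (Real.exp s) ^ m :=
          pow_le_pow_left₀ (Real.cosh_pos s).le (cosh_le_exp' hs) m
      _ = Real.exp ((m : ℝ) * s) := by
          rw [← Real.exp_nat_mul]
  have h3 : Real.cosh (γ * s) ≤ Real.exp (γ * s) := cosh_le_exp' (by positivity)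
  calc Real.exp (-ρ * Real.cosh s) * Real.cosh s ^ m * Real.cosh (γ * s)
      ≤ Real.exp (-(ρ/2) + (- (ρ/4 * Real.exp s))) * Real.exp ((m:ℝ) * s) * Real.exp (γ * s) := by
        apply mul_le_mul (mul_le_mul h1 h2 (by positivity) (Real.exp_pos _).le) h3
          (Real.cosh_pos _).le (by positivity)
    _ = Real.exp (-(ρ/2)) * Real.exp (((m : ℝ) + γ) * s - ρ/4 * Real.exp s) := by
        rw [← Real.exp_add, ← Real.exp_add, ← Real.exp_add]; ring_nf

lemma integrableOn_KK_integrand {γ ρ : ℝ} (hγ : 0 < γ) (hρ : 0 < ρ) (m : ℕ) :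
    IntegrableOn (fun s => Real.exp (-ρ * Real.cosh s) * Real.cosh s ^ m * Real.cosh (γ * s))
      (Ioi (0:ℝ)) := by
  apply Integrable.mono' (((integrableOn_exp_mul_sub_exp ((m:ℝ) + γ)
    (by positivity : (0:ℝ) < ρ/4)).const_mul (Real.exp (-(ρ/2)))))
  · apply Continuous.aestronglyMeasurable ?_ |>.restrict
    continuity
  · filter_upwards [ae_restrict_mem measurableSet_Ioi] with s hs
    rw [Real.norm_eq_abs, abs_of_nonneg (KK_integrand_nonneg γ m ρ s)]
    exact KK_integrand_bound hγ hρ m (le_of_lt hs)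

lemma KK_nonneg (γ : ℝ) (m : ℕ) (ρ : ℝ) : 0 ≤ KK γ m ρ :=
  setIntegral_nonneg measurableSet_Ioi fun s _ => KK_integrand_nonneg γ m ρ s

lemma exp_image_Ioi : Real.exp '' Ioi (0:ℝ) = Ioi (1:ℝ) := by
  ext x
  constructor
  · rintro ⟨s, hs, rfl⟩
    simpa using Real.exp_lt_exp.2 hs
  · intro hx
    exact ⟨Real.log x, Real.log_pos hx, Real.exp_log (lt_trans one_pos hx)⟩

lemma integral_exp_mul_sub_exp_le {a b : ℝ} (ha : 0 < a) (hb : 0 < b) :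
    ∫ s in Ioi (0:ℝ), Real.exp (b * s - a * Real.exp s) ≤ (1/a) ^ b * Real.Gamma b := by
  set g : ℝ → ℝ := fun u => u ^ (b - 1) * Real.exp (-(a * u)) with hgdef
  have hgint : IntegrableOn g (Ioi (0:ℝ)) := by
    have := integrableOn_rpow_mul_exp_neg_mul_rpow (p := 1) (s := b - 1) (b := a)
      (by linarith) one_pos ha
    apply this.congr_fun ?_ measurableSet_Ioi
    intro x _
    simp [Real.rpow_one, neg_mul, g]
  have key : ∫ s in Ioi (0:ℝ), Real.exp (b * s - a * Real.exp s) = ∫ u in Ioi (1:ℝ), g u := by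
    rw [← exp_image_Ioi, integral_image_eq_integral_abs_deriv_smul measurableSet_Ioi
      (fun x _ => (Real.hasDerivAt_exp x).hasDerivWithinAt) Real.exp_injective.injOn g]
    apply setIntegral_congr_fun measurableSet_Ioi
    intro s _
    rw [hgdef]
    simp only [abs_of_pos (Real.exp_pos s), smul_eq_mul,
      ← Real.exp_mul]
    rw [← Real.exp_add, ← Real.exp_add]
    ring_nf
  rw [key]
  calc ∫ u in Ioi (1:ℝ), g u ≤ ∫ u in Ioi (0:ℝ), g u := by
        apply setIntegral_mono_set hgint
        · filter_upwards [ae_restrict_mem measurableSet_Ioi] with u hu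
          have : (0:ℝ) < u := hu
          positivity
        · exact (Ioi_subset_Ioi zero_le_one).eventuallyLE
    _ = (1/a) ^ b * Real.Gamma b := by
        have := Real.integral_rpow_mul_exp_neg_mul_Ioi hb ha
        simpa [g] using this

end KK

section KK2
open Set Real

lemma KK_le {γ ρ : ℝ} (hγ : 0 < γ) (hρ : 0 < ρ) (m : ℕ) :
    KK γ m ρ ≤ Real.Gamma ((m:ℝ) + γ) * 4 ^ ((m:ℝ) + γ) * ρ ^ (-((m:ℝ) + γ)) *
      Real.exp (-(ρ/2)) := by
  have hb : (0:ℝ) < (m:ℝ) + γ := by positivity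
  have step1 : KK γ m ρ ≤ Real.exp (-(ρ/2)) *
      ∫ s in Ioi (0:ℝ), Real.exp (((m:ℝ) + γ) * s - ρ/4 * Real.exp s) := by
    rw [← integral_const_mul]
    apply setIntegral_mono_on (integrableOn_KK_integrand hγ hρ m)
      (((integrableOn_exp_mul_sub_exp ((m:ℝ) + γ) (by positivity : (0:ℝ) < ρ/4)).const_mul
        (Real.exp (-(ρ/2))))) measurableSet_Ioi
    intro s hs
    exact KK_integrand_bound hγ hρ m (le_of_lt hs)
  have step2 : ∫ s in Ioi (0:ℝ), Real.exp (((m:ℝ) + γ) * s - ρ/4 * Real.exp s)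
      ≤ (1/(ρ/4)) ^ ((m:ℝ) + γ) * Real.Gamma ((m:ℝ) + γ) :=
    integral_exp_mul_sub_exp_le (by positivity) hb
  have h3 : (1/(ρ/4)) ^ ((m:ℝ) + γ) = 4 ^ ((m:ℝ) + γ) * ρ ^ (-((m:ℝ) + γ)) := by
    rw [one_div, inv_div, div_rpow (by norm_num) hρ.le, Real.rpow_neg hρ.le]
    ring
  calc KK γ m ρ ≤ Real.exp (-(ρ/2)) * ((1/(ρ/4)) ^ ((m:ℝ) + γ) * Real.Gamma ((m:ℝ) + γ)) :=
        step1.trans (by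
          apply mul_le_mul_of_nonneg_left step2 (Real.exp_pos _).le)
    _ = Real.Gamma ((m:ℝ) + γ) * 4 ^ ((m:ℝ) + γ) * ρ ^ (-((m:ℝ) + γ)) * Real.exp (-(ρ/2)) := by
        rw [h3]; ring

lemma hasDerivAt_KK {γ : ℝ} (hγ : 0 < γ) (m : ℕ) {ρ : ℝ} (hρ : 0 < ρ) :
    HasDerivAt (KK γ m) (-KK γ (m+1) ρ) ρ := by
  have hball : ∀ t ∈ Metric.ball ρ (ρ/2), ρ/2 < t := by
    intro t ht
    rw [Metric.mem_ball, Real.dist_eq, abs_lt] at ht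
    linarith [ht.1]
  have main := hasDerivAt_integral_of_dominated_loc_of_deriv_le
    (F := fun t s => Real.exp (-t * Real.cosh s) * Real.cosh s ^ m * Real.cosh (γ * s))
    (F' := fun t s => -(Real.exp (-t * Real.cosh s) * Real.cosh s ^ (m+1) * Real.cosh (γ * s)))
    (x₀ := ρ) (s := Metric.ball ρ (ρ/2))
    (bound := fun s => Real.exp (-(ρ/2) * Real.cosh s) * Real.cosh s ^ (m+1) * Real.cosh (γ * s))
    (μ := volume.restrict (Ioi (0:ℝ))) (Metric.ball_mem_nhds ρ (by positivity))
    (Eventually.of_forall fun t =>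
      (Continuous.aestronglyMeasurable (by continuity)).restrict)
    ((integrableOn_KK_integrand hγ hρ m))
    ((Continuous.aestronglyMeasurable (by continuity)).restrict)
    ?_ ((integrableOn_KK_integrand hγ (by positivity : (0:ℝ) < ρ/2) (m+1))) ?_
  · have h2 : HasDerivAt (KK γ m)
        (∫ s in Ioi (0:ℝ), -(Real.exp (-ρ * Real.cosh s) * Real.cosh s ^ (m+1) * Real.cosh (γ * s))) ρ :=
      main.2
    rwa [integral_neg] at h2
  · apply ae_of_all
    intro s t ht
    rw [norm_neg, Real.norm_eq_abs, abs_of_nonneg (KK_integrand_nonneg γ (m+1) t s)]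
    have h1 : Real.exp (-t * Real.cosh s) ≤ Real.exp (-(ρ/2) * Real.cosh s) := by
      apply Real.exp_le_exp.2
      have := (hball t ht)
      nlinarith [Real.cosh_pos s]
    apply mul_le_mul_of_nonneg_right (mul_le_mul_of_nonneg_right h1 (by positivity))
      (Real.cosh_pos _).le
  · apply ae_of_all
    intro s t ht
    have h : HasDerivAt (fun t => Real.exp (-t * Real.cosh s))
        (-Real.cosh s * Real.exp (-t * Real.cosh s)) t := by
      have := ((hasDerivAt_id t).neg.mul_const (Real.cosh s)).exp
      simpa [mul_comm] using this
    have := (h.mul_const (Real.cosh s ^ m)).mul_const (Real.cosh (γ * s))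
    refine this.congr_deriv ?_
    ring

lemma continuousOn_KK {γ : ℝ} (hγ : 0 < γ) (m : ℕ) :
    ContinuousOn (KK γ m) (Ioi (0:ℝ)) :=
  fun ρ hρ => (hasDerivAt_KK hγ m hρ).continuousAt.continuousWithinAt

end KK2

section ODE
open Set Real

lemma tendsto_exp_mul_sub_exp (c : ℝ) {a : ℝ} (ha : 0 < a) :
    Tendsto (fun s => Real.exp (c * s - a * Real.exp s)) atTop (𝓝 0) := by
  apply squeeze_zero' (Eventually.of_forall fun s => (Real.exp_pos _).le)
    (by filter_upwards [eventually_ge_atTop (0:ℝ)] with s hs using exp_decay_aux c ha hs)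
  rw [show (0:ℝ) = Real.exp ((c+1)^2/a) * 0 by ring]
  exact (tendsto_exp_neg_atTop_nhds_zero.const_mul _)

lemma ODE_KK {γ ρ : ℝ} (hγ : 0 < γ) (hρ : 0 < ρ) :
    ρ^2 * KK γ 2 ρ - ρ * KK γ 1 ρ - (ρ^2 + γ^2) * KK γ 0 ρ = 0 := by
  set F : ℝ → ℝ := fun s =>
    -(Real.exp (-ρ * Real.cosh s) * (ρ * Real.sinh s * Real.cosh (γ * s) + γ * Real.sinh (γ * s)))
    with hFdef
  set G : ℝ → ℝ := fun s =>
    Real.exp (-ρ * Real.cosh s) * ((ρ^2 * Real.sinh s ^ 2 - ρ * Real.cosh s - γ^2) *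
      Real.cosh (γ * s)) with hGdef
  have hγs : ∀ s : ℝ, HasDerivAt (fun s : ℝ => γ * s) γ s := fun s => by
    simpa using (hasDerivAt_id s).const_mul γ
  have hF : ∀ s : ℝ, HasDerivAt F (G s) s := by
    intro s
    have h1 : HasDerivAt (fun s => Real.exp (-ρ * Real.cosh s))
        (Real.exp (-ρ * Real.cosh s) * (-ρ * Real.sinh s)) s :=
      ((Real.hasDerivAt_cosh s).const_mul (-ρ)).exp
    have h2 : HasDerivAt (fun s => ρ * Real.sinh s * Real.cosh (γ * s) + γ * Real.sinh (γ * s))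
        (ρ * Real.cosh s * Real.cosh (γ * s) + (ρ * Real.sinh s) * (Real.sinh (γ * s) * γ)
          + γ * (Real.cosh (γ * s) * γ)) s :=
      ((((Real.hasDerivAt_sinh s).const_mul ρ).mul ((hγs s).cosh)).add
        (((hγs s).sinh).const_mul γ))
    have := (h1.mul h2).neg
    refine this.congr_deriv ?_
    simp only [hGdef]
    ring
  have hGpieces : ∀ s : ℝ, G s =
      ρ^2 * (Real.exp (-ρ * Real.cosh s) * Real.cosh s ^ 2 * Real.cosh (γ * s))
      - ρ * (Real.exp (-ρ * Real.cosh s) * Real.cosh s ^ 1 * Real.cosh (γ * s))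
      - (ρ^2 + γ^2) * (Real.exp (-ρ * Real.cosh s) * Real.cosh s ^ 0 * Real.cosh (γ * s)) := by
    intro s
    have hsq := Real.sinh_sq s
    simp only [hGdef, pow_zero, pow_one, mul_one]
    rw [hsq]
    ring
  have hGint : IntegrableOn G (Ioi (0:ℝ)) := by
    apply IntegrableOn.congr_fun ?_ (fun s _ => (hGpieces s).symm) measurableSet_Ioi
    exact (((integrableOn_KK_integrand hγ hρ 2).const_mul _).sub
      ((integrableOn_KK_integrand hγ hρ 1).const_mul _)).sub
      ((integrableOn_KK_integrand hγ hρ 0).const_mul _)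
  have hlim0 : Tendsto F (𝓝[>] (0:ℝ)) (𝓝 0) := by
    have h1 : Tendsto F (𝓝 (0:ℝ)) (𝓝 (F 0)) := (hF 0).continuousAt.tendsto
    have h0 : F 0 = 0 := by simp [hFdef]
    rw [h0] at h1
    exact h1.mono_left nhdsWithin_le_nhds
  have hliminf : Tendsto F atTop (𝓝 0) := by
    have hg : Tendsto (fun s => ρ * Real.exp (-(ρ/2)) * Real.exp ((1 + γ) * s - ρ/4 * Real.exp s)
        + γ * Real.exp (-(ρ/2)) * Real.exp (γ * s - ρ/4 * Real.exp s)) atTop (𝓝 0) := by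
      have := ((tendsto_exp_mul_sub_exp (1 + γ) (by positivity : (0:ℝ) < ρ/4)).const_mul
          (ρ * Real.exp (-(ρ/2)))).add
        ((tendsto_exp_mul_sub_exp γ (by positivity : (0:ℝ) < ρ/4)).const_mul
          (γ * Real.exp (-(ρ/2))))
      simpa using this
    apply squeeze_zero_norm' ?_ hg
    filter_upwards [eventually_ge_atTop (0:ℝ)] with s hs
    have b1 := KK_integrand_bound hγ hρ 1 hs
    have b0 := KK_integrand_bound hγ hρ 0 hs
    simp only [pow_one, pow_zero, mul_one, Nat.cast_one, Nat.cast_zero, zero_add] at b1 b0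
    have h1 : |ρ * Real.sinh s * Real.cosh (γ * s) + γ * Real.sinh (γ * s)|
        ≤ ρ * (Real.cosh s * Real.cosh (γ * s)) + γ * Real.cosh (γ * s) := by
      have hs1 : |ρ * Real.sinh s * Real.cosh (γ * s)| ≤ ρ * (Real.cosh s * Real.cosh (γ * s)) := by
        rw [abs_mul, abs_mul, abs_of_pos hρ, abs_of_pos (Real.cosh_pos _)]
        calc ρ * |Real.sinh s| * Real.cosh (γ * s)
            = |Real.sinh s| * (ρ * Real.cosh (γ * s)) := by ring
          _ ≤ Real.cosh s * (ρ * Real.cosh (γ * s)) :=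
              mul_le_mul_of_nonneg_right (abs_sinh_le_cosh s) (by positivity)
          _ = ρ * (Real.cosh s * Real.cosh (γ * s)) := by ring
      have hs2 : |γ * Real.sinh (γ * s)| ≤ γ * Real.cosh (γ * s) := by
        rw [abs_mul, abs_of_pos hγ]
        exact mul_le_mul_of_nonneg_left (abs_sinh_le_cosh _) hγ.le
      exact (abs_add_le _ _).trans (add_le_add hs1 hs2)
    have habs : ‖F s‖ ≤ ρ * (Real.exp (-ρ * Real.cosh s) * Real.cosh s * Real.cosh (γ * s))
        + γ * (Real.exp (-ρ * Real.cosh s) * Real.cosh (γ * s)) := by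
      rw [hFdef]
      simp only [norm_neg, Real.norm_eq_abs]
      rw [abs_mul, abs_of_pos (Real.exp_pos _)]
      calc Real.exp (-ρ * Real.cosh s) * |ρ * Real.sinh s * Real.cosh (γ * s) + γ * Real.sinh (γ * s)|
          ≤ Real.exp (-ρ * Real.cosh s) * (ρ * (Real.cosh s * Real.cosh (γ * s)) + γ * Real.cosh (γ * s)) :=
            mul_le_mul_of_nonneg_left h1 (Real.exp_pos _).le
        _ = ρ * (Real.exp (-ρ * Real.cosh s) * Real.cosh s * Real.cosh (γ * s))
            + γ * (Real.exp (-ρ * Real.cosh s) * Real.cosh (γ * s)) := by ring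
    refine habs.trans ?_
    have e1 : Real.exp (-ρ * Real.cosh s) * Real.cosh s * Real.cosh (γ * s)
        ≤ Real.exp (-(ρ/2)) * Real.exp ((1 + γ) * s - ρ/4 * Real.exp s) := b1
    have e0 : Real.exp (-ρ * Real.cosh s) * Real.cosh (γ * s)
        ≤ Real.exp (-(ρ/2)) * Real.exp (γ * s - ρ/4 * Real.exp s) := b0
    calc ρ * (Real.exp (-ρ * Real.cosh s) * Real.cosh s * Real.cosh (γ * s))
        + γ * (Real.exp (-ρ * Real.cosh s) * Real.cosh (γ * s))
        ≤ ρ * (Real.exp (-(ρ/2)) * Real.exp ((1 + γ) * s - ρ/4 * Real.exp s))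
          + γ * (Real.exp (-(ρ/2)) * Real.exp (γ * s - ρ/4 * Real.exp s)) := by
          gcongr
      _ = ρ * Real.exp (-(ρ/2)) * Real.exp ((1 + γ) * s - ρ/4 * Real.exp s)
          + γ * Real.exp (-(ρ/2)) * Real.exp (γ * s - ρ/4 * Real.exp s) := by ring
  have key : ∫ s in Ioi (0:ℝ), G s = 0 := by
    have := integral_Ioi_zero_eq_sub (fun s _ => hF s) hGint hlim0 hliminf
    simpa using this
  have hsplit : ∫ s in Ioi (0:ℝ), G s
      = ρ^2 * KK γ 2 ρ - ρ * KK γ 1 ρ - (ρ^2 + γ^2) * KK γ 0 ρ := by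
    have i0 := integrableOn_KK_integrand hγ hρ 0
    have i1 := integrableOn_KK_integrand hγ hρ 1
    have i2 := integrableOn_KK_integrand hγ hρ 2
    calc ∫ s in Ioi (0:ℝ), G s
        = ∫ s in Ioi (0:ℝ),
            (ρ^2 * (Real.exp (-ρ * Real.cosh s) * Real.cosh s ^ 2 * Real.cosh (γ * s))
            - ρ * (Real.exp (-ρ * Real.cosh s) * Real.cosh s ^ 1 * Real.cosh (γ * s))
            - (ρ^2 + γ^2) * (Real.exp (-ρ * Real.cosh s) * Real.cosh s ^ 0 * Real.cosh (γ * s))) :=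
          setIntegral_congr_fun measurableSet_Ioi (fun s _ => hGpieces s)
      _ = (∫ s in Ioi (0:ℝ),
            (ρ^2 * (Real.exp (-ρ * Real.cosh s) * Real.cosh s ^ 2 * Real.cosh (γ * s))
            - ρ * (Real.exp (-ρ * Real.cosh s) * Real.cosh s ^ 1 * Real.cosh (γ * s))))
          - ∫ s in Ioi (0:ℝ),
            (ρ^2 + γ^2) * (Real.exp (-ρ * Real.cosh s) * Real.cosh s ^ 0 * Real.cosh (γ * s)) :=
          integral_sub ((i2.const_mul _).sub (i1.const_mul _)) (i0.const_mul _)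
      _ = (∫ s in Ioi (0:ℝ),
            ρ^2 * (Real.exp (-ρ * Real.cosh s) * Real.cosh s ^ 2 * Real.cosh (γ * s)))
          - (∫ s in Ioi (0:ℝ),
            ρ * (Real.exp (-ρ * Real.cosh s) * Real.cosh s ^ 1 * Real.cosh (γ * s)))
          - ∫ s in Ioi (0:ℝ),
            (ρ^2 + γ^2) * (Real.exp (-ρ * Real.cosh s) * Real.cosh s ^ 0 * Real.cosh (γ * s)) := by
          rw [integral_sub (i2.const_mul _) (i1.const_mul _)]
      _ = ρ^2 * KK γ 2 ρ - ρ * KK γ 1 ρ - (ρ^2 + γ^2) * KK γ 0 ρ := by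
          rw [integral_const_mul, integral_const_mul, integral_const_mul]
          rfl
  rw [← hsplit, key]

end ODE

section PSI
open Set Real

noncomputable def psiF (c γ ρ : ℝ) : ℝ := c * ρ ^ (-γ) * KK γ 0 ρ

noncomputable def psiF' (c γ ρ : ℝ) : ℝ :=
  c * (-γ * ρ ^ (-γ - 1) * KK γ 0 ρ - ρ ^ (-γ) * KK γ 1 ρ)

noncomputable def psiF'' (c γ ρ : ℝ) : ℝ :=
  c * (γ * (γ + 1) * ρ ^ (-γ - 2) * KK γ 0 ρ + 2 * γ * ρ ^ (-γ - 1) * KK γ 1 ρ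
    + ρ ^ (-γ) * KK γ 2 ρ)

lemma hasDerivAt_psiF {γ : ℝ} (c : ℝ) (hγ : 0 < γ) {ρ : ℝ} (hρ : 0 < ρ) :
    HasDerivAt (fun ρ => psiF c γ ρ) (psiF' c γ ρ) ρ := by
  have h := ((Real.hasDerivAt_rpow_const (x := ρ) (p := -γ) (Or.inl hρ.ne')).const_mul c).mul
    (hasDerivAt_KK hγ 0 hρ)
  refine h.congr_deriv ?_
  simp only [psiF']
  ring

lemma hasDerivAt_psiF' {γ : ℝ} (c : ℝ) (hγ : 0 < γ) {ρ : ℝ} (hρ : 0 < ρ) :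
    HasDerivAt (fun ρ => psiF' c γ ρ) (psiF'' c γ ρ) ρ := by
  have h1 := ((Real.hasDerivAt_rpow_const (x := ρ) (p := -γ - 1) (Or.inl hρ.ne')).const_mul
    (-γ)).mul (hasDerivAt_KK hγ 0 hρ)
  have h2 := (Real.hasDerivAt_rpow_const (x := ρ) (p := -γ) (Or.inl hρ.ne')).mul
    (hasDerivAt_KK hγ 1 hρ)
  have h := ((h1.sub h2).const_mul c)
  refine h.congr_deriv ?_
  simp only [psiF'']
  rw [show -γ - 1 - 1 = -γ - 2 by ring]
  ring

lemma ODE_psiF {γ : ℝ} (c : ℝ) (hγ : 0 < γ) {ρ : ℝ} (hρ : 0 < ρ) :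
    psiF'' c γ ρ = psiF c γ ρ - (1 + 2 * γ) / ρ * psiF' c γ ρ := by
  have hODE := ODE_KK hγ hρ
  have e2 : ρ ^ (-γ - 2) = ρ ^ (-γ) / ρ / ρ := by
    rw [show -γ - 2 = -γ - 1 - 1 by ring, Real.rpow_sub_one hρ.ne',
      Real.rpow_sub_one hρ.ne']
  have e1 : ρ ^ (-γ - 1) = ρ ^ (-γ) / ρ := Real.rpow_sub_one hρ.ne' _
  simp only [psiF'', psiF, psiF', e1, e2]
  field_simp
  linear_combination c * hODE

end PSI

section BOUNDS
open Set Real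

lemma psiF_bounds {γ : ℝ} (c : ℝ) (hγ : 0 < γ) :
    ∃ C : ℝ, 0 ≤ C ∧ ∀ ρ : ℝ, 0 < ρ →
      |psiF c γ ρ| ≤ C * ρ ^ (-(2*γ)) * Real.exp (-(ρ/2)) ∧
      |psiF' c γ ρ| ≤ C * ρ ^ (-(2*γ) - 1) * Real.exp (-(ρ/2)) := by
  set C0 : ℝ := Real.Gamma γ * 4 ^ γ with hC0
  set C1 : ℝ := Real.Gamma (1 + γ) * 4 ^ (1 + γ) with hC1
  have hC0pos : 0 < C0 := by
    have := Real.Gamma_pos_of_pos hγ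
    positivity
  have hC1pos : 0 < C1 := by
    have := Real.Gamma_pos_of_pos (by linarith : (0:ℝ) < 1 + γ)
    positivity
  refine ⟨|c| * (γ * C0 + C0 + C1), by positivity, fun ρ hρ => ?_⟩
  have hK0 : KK γ 0 ρ ≤ C0 * ρ ^ (-γ) * Real.exp (-(ρ/2)) := by
    have := KK_le hγ hρ 0
    simpa [hC0, mul_assoc] using this
  have hK1 : KK γ 1 ρ ≤ C1 * ρ ^ (-(1+γ)) * Real.exp (-(ρ/2)) := by
    have := KK_le hγ hρ 1
    simpa [hC1, mul_assoc] using this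
  have hr : (0:ℝ) < ρ ^ (-γ) := Real.rpow_pos_of_pos hρ _
  have hr2 : ρ ^ (-γ) * ρ ^ (-γ) = ρ ^ (-(2*γ)) := by
    rw [← Real.rpow_add hρ]; ring_nf
  have hr3 : ρ ^ (-γ - 1) * ρ ^ (-γ) = ρ ^ (-(2*γ)-1) := by
    rw [← Real.rpow_add hρ]; ring_nf
  have hr4 : ρ ^ (-γ) * ρ ^ (-(1+γ)) = ρ ^ (-(2*γ)-1) := by
    rw [← Real.rpow_add hρ]; ring_nf
  constructor
  · have : |psiF c γ ρ| = |c| * (ρ ^ (-γ) * KK γ 0 ρ) := by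
      rw [psiF, abs_mul, abs_mul, abs_of_pos hr,
        abs_of_nonneg (KK_nonneg γ 0 ρ), mul_assoc]
    rw [this]
    calc |c| * (ρ ^ (-γ) * KK γ 0 ρ)
        ≤ |c| * (ρ ^ (-γ) * (C0 * ρ ^ (-γ) * Real.exp (-(ρ/2)))) := by
          apply mul_le_mul_of_nonneg_left ?_ (abs_nonneg c)
          exact mul_le_mul_of_nonneg_left hK0 hr.le
      _ = (|c| * C0) * (ρ ^ (-γ) * ρ ^ (-γ)) * Real.exp (-(ρ/2)) := by ring
      _ = (|c| * C0) * ρ ^ (-(2*γ)) * Real.exp (-(ρ/2)) := by rw [hr2]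
      _ ≤ |c| * (γ * C0 + C0 + C1) * ρ ^ (-(2*γ)) * Real.exp (-(ρ/2)) := by
          gcongr ?_ * _ * _
          nlinarith [mul_nonneg (abs_nonneg c) (mul_pos hγ hC0pos).le,
            mul_nonneg (abs_nonneg c) hC1pos.le]
  · have habs : |psiF' c γ ρ| ≤ |c| * (γ * (ρ ^ (-γ-1) * KK γ 0 ρ) + ρ ^ (-γ) * KK γ 1 ρ) := by
      rw [psiF', abs_mul]
      apply mul_le_mul_of_nonneg_left ?_ (abs_nonneg c)
      refine (abs_sub _ _).trans ?_
      have hr1 : (0:ℝ) < ρ ^ (-γ-1) := Real.rpow_pos_of_pos hρ _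
      rw [abs_mul, abs_mul, abs_mul, abs_of_pos hr1, abs_of_pos hr,
        abs_of_nonneg (KK_nonneg γ 0 ρ), abs_of_nonneg (KK_nonneg γ 1 ρ), abs_neg,
        abs_of_pos hγ]
      apply le_of_eq
      ring
    refine habs.trans ?_
    have hr1 : (0:ℝ) < ρ ^ (-γ-1) := Real.rpow_pos_of_pos hρ _
    calc |c| * (γ * (ρ ^ (-γ-1) * KK γ 0 ρ) + ρ ^ (-γ) * KK γ 1 ρ)
        ≤ |c| * (γ * (ρ ^ (-γ-1) * (C0 * ρ ^ (-γ) * Real.exp (-(ρ/2))))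
            + ρ ^ (-γ) * (C1 * ρ ^ (-(1+γ)) * Real.exp (-(ρ/2)))) := by
          gcongr
      _ = (|c| * (γ * C0)) * (ρ ^ (-γ-1) * ρ ^ (-γ)) * Real.exp (-(ρ/2))
          + (|c| * C1) * (ρ ^ (-γ) * ρ ^ (-(1+γ))) * Real.exp (-(ρ/2)) := by ring
      _ = (|c| * (γ * C0) + |c| * C1) * ρ ^ (-(2*γ)-1) * Real.exp (-(ρ/2)) := by
          rw [hr3, hr4]; ring
      _ ≤ |c| * (γ * C0 + C0 + C1) * ρ ^ (-(2*γ)-1) * Real.exp (-(ρ/2)) := by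
          gcongr ?_ * _ * _
          nlinarith [mul_nonneg (abs_nonneg c) hC0pos.le]

end BOUNDS

section MODELS
open Set Real

lemma integrableOn_rpow_mul_exp_neg {p : ℝ} (hp : -1 < p) :
    IntegrableOn (fun ρ : ℝ => ρ ^ p * Real.exp (-ρ)) (Ioi (0:ℝ)) := by
  have := integrableOn_rpow_mul_exp_neg_mul_rpow (p := 1) (s := p) (b := 1) hp one_pos one_pos
  apply this.congr_fun ?_ measurableSet_Ioi
  intro x _
  simp [Real.rpow_one]

lemma tendsto_rpow_exp_zero_nhds {p : ℝ} (hp : 0 < p) :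
    Tendsto (fun ρ : ℝ => ρ ^ p * Real.exp (-ρ)) (𝓝[>] (0:ℝ)) (𝓝 0) := by
  have h1 : Tendsto (fun ρ : ℝ => ρ ^ p) (𝓝 (0:ℝ)) (𝓝 ((0:ℝ) ^ p)) :=
    (Real.continuousAt_rpow_const 0 p (Or.inr hp.le)).tendsto
  rw [Real.zero_rpow hp.ne'] at h1
  have h2 : Tendsto (fun ρ : ℝ => Real.exp (-ρ)) (𝓝 (0:ℝ)) (𝓝 (Real.exp 0)) := by
    exact (Real.continuous_exp.comp continuous_neg).tendsto' 0 _ (by simp)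
  have := h1.mul h2
  rw [zero_mul] at this
  exact this.mono_left nhdsWithin_le_nhds

lemma tendsto_rpow_exp_zero_atTop (p : ℝ) :
    Tendsto (fun ρ : ℝ => ρ ^ p * Real.exp (-ρ)) atTop (𝓝 0) := by
  have := tendsto_rpow_mul_exp_neg_mul_atTop_nhds_zero p 1 one_pos
  simpa using this

lemma tendsto_of_abs_le_rpow_exp {f : ℝ → ℝ} {C p : ℝ} (hp : 0 < p)
    (h : ∀ ρ : ℝ, 0 < ρ → |f ρ| ≤ C * (ρ ^ p * Real.exp (-ρ))) :
    Tendsto f (𝓝[>] (0:ℝ)) (𝓝 0) ∧ Tendsto f atTop (𝓝 0) := by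
  constructor
  · apply squeeze_zero_norm' ?_ (by simpa using (tendsto_rpow_exp_zero_nhds hp).const_mul C)
    filter_upwards [self_mem_nhdsWithin] with ρ hρ
    exact h ρ hρ
  · apply squeeze_zero_norm' ?_ (by simpa using (tendsto_rpow_exp_zero_atTop p).const_mul C)
    filter_upwards [eventually_gt_atTop (0:ℝ)] with ρ hρ
    exact h ρ hρ

lemma integrableOn_of_abs_le_rpow_exp {f : ℝ → ℝ} {C p : ℝ} (hp : -1 < p)
    (hmeas : AEStronglyMeasurable f (volume.restrict (Ioi (0:ℝ))))
    (h : ∀ ρ : ℝ, 0 < ρ → |f ρ| ≤ C * (ρ ^ p * Real.exp (-ρ))) :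
    IntegrableOn f (Ioi (0:ℝ)) := by
  apply Integrable.mono' ((integrableOn_rpow_mul_exp_neg hp).const_mul C) hmeas
  filter_upwards [ae_restrict_mem measurableSet_Ioi] with ρ hρ
  exact h ρ hρ

lemma abs_mul_mul_rpow_bound {P Q C a b t p ρ : ℝ} (hρ : 0 < ρ) (hC : 0 ≤ C)
    (hP : |P| ≤ C * ρ ^ a * Real.exp (-(ρ/2))) (hQ : |Q| ≤ C * ρ ^ b * Real.exp (-(ρ/2)))
    (hsum : a + b + t = p) :
    |P * Q * ρ ^ t| ≤ C^2 * (ρ ^ p * Real.exp (-ρ)) := by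
  have ht : (0:ℝ) < ρ ^ t := Real.rpow_pos_of_pos hρ _
  have h1 : |P * Q * ρ ^ t| = |P| * |Q| * ρ ^ t := by
    rw [abs_mul, abs_mul, abs_of_pos ht]
  rw [h1]
  have h2 : |P| * |Q| * ρ ^ t
      ≤ (C * ρ ^ a * Real.exp (-(ρ/2))) * (C * ρ ^ b * Real.exp (-(ρ/2))) * ρ ^ t := by
    gcongr <;> positivity
  refine h2.trans (le_of_eq ?_)
  rw [show (C * ρ ^ a * Real.exp (-(ρ/2))) * (C * ρ ^ b * Real.exp (-(ρ/2))) * ρ ^ t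
    = C^2 * ((ρ ^ a * ρ ^ b * ρ ^ t) * (Real.exp (-(ρ/2)) * Real.exp (-(ρ/2)))) by ring,
    ← Real.exp_add, ← Real.rpow_add hρ, ← Real.rpow_add hρ, hsum,
    show -(ρ/2) + -(ρ/2) = -ρ by ring]

lemma abs_sq_mul_rpow_bound {P C a t p ρ : ℝ} (hρ : 0 < ρ) (hC : 0 ≤ C)
    (hP : |P| ≤ C * ρ ^ a * Real.exp (-(ρ/2))) (hsum : a + a + t = p) :
    |P^2 * ρ ^ t| ≤ C^2 * (ρ ^ p * Real.exp (-ρ)) := by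
  rw [pow_two]
  exact abs_mul_mul_rpow_bound hρ hC hP hP hsum

end MODELS

end AUX

section MAIN
open Set
theorem stmt_9 (n : ℕ) (γ η : ℝ) (hγ0 : 0 < γ) (hγ1 : γ < 1) (hn : 2 * γ < (n : ℝ))
    (hη : 4 * γ + 1 < η) :
    IntegrableOn (fun ρ => (deriv (psiK n γ) ρ) ^ 2 * ρ ^ η) (Set.Ioi 0) volume ∧
    IntegrableOn (fun ρ => (psiK n γ ρ) ^ 2 * ρ ^ η) (Set.Ioi 0) volume ∧
    IntegrableOn (fun ρ => (psiK n γ ρ) ^ 2 * ρ ^ (η - 2)) (Set.Ioi 0) volume ∧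
    ((η + 1) / 2 - (1 + 2 * γ)) *
        (∫ ρ in Set.Ioi (0 : ℝ), (deriv (psiK n γ) ρ) ^ 2 * ρ ^ η) =
      ((η + 1) / 2) * (∫ ρ in Set.Ioi (0 : ℝ), (psiK n γ ρ) ^ 2 * ρ ^ η) ∧
    (∫ ρ in Set.Ioi (0 : ℝ), (psiK n γ ρ) ^ 2 * ρ ^ η) =
      (η - (1 + 2 * γ)) * ((η - 1) / 2) *
        (1 + ((η + 1) / 2) * ((η + 1) / 2 - (1 + 2 * γ))⁻¹)⁻¹ *
        (∫ ρ in Set.Ioi (0 : ℝ), (psiK n γ ρ) ^ 2 * ρ ^ (η - 2)) := by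
  have hψ : psiK n γ = fun ρ => psiF (dTwo n γ) γ ρ := by
    funext ρ
    simp [psiK, besselK, psiF, KK]
  set c := dTwo n γ with hc
  obtain ⟨C, hC, hCb⟩ := psiF_bounds c hγ0
  have hderiv : ∀ ρ ∈ Ioi (0:ℝ), deriv (psiK n γ) ρ = psiF' c γ ρ := by
    intro ρ hρ
    rw [hψ]
    exact (hasDerivAt_psiF c hγ0 hρ).deriv
  have contP : ContinuousOn (fun ρ => psiF c γ ρ) (Ioi (0:ℝ)) :=
    fun ρ hρ => (hasDerivAt_psiF c hγ0 hρ).continuousAt.continuousWithinAt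
  have contQ : ContinuousOn (fun ρ => psiF' c γ ρ) (Ioi (0:ℝ)) :=
    fun ρ hρ => (hasDerivAt_psiF' c hγ0 hρ).continuousAt.continuousWithinAt
  have contR : ∀ t : ℝ, ContinuousOn (fun ρ : ℝ => ρ ^ t) (Ioi (0:ℝ)) := fun t =>
    continuousOn_id.rpow_const (fun x hx => Or.inl (ne_of_gt hx))
  have measQQ : ∀ t : ℝ, AEStronglyMeasurable (fun ρ => psiF' c γ ρ ^ 2 * ρ ^ t)
      (volume.restrict (Ioi (0:ℝ))) := fun t =>
    (((contQ.pow 2).mul (contR t)).aestronglyMeasurable measurableSet_Ioi)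
  have measPP : ∀ t : ℝ, AEStronglyMeasurable (fun ρ => psiF c γ ρ ^ 2 * ρ ^ t)
      (volume.restrict (Ioi (0:ℝ))) := fun t =>
    (((contP.pow 2).mul (contR t)).aestronglyMeasurable measurableSet_Ioi)
  -- integrability of the three atomic integrands
  have hI1 : IntegrableOn (fun ρ => psiF' c γ ρ ^ 2 * ρ ^ η) (Ioi (0:ℝ)) :=
    integrableOn_of_abs_le_rpow_exp (C := C^2) (p := η - 4*γ - 2) (by linarith) (measQQ η)
      (fun ρ hρ => abs_sq_mul_rpow_bound hρ hC (hCb ρ hρ).2 (by ring))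
  have hI0 : IntegrableOn (fun ρ => psiF c γ ρ ^ 2 * ρ ^ η) (Ioi (0:ℝ)) :=
    integrableOn_of_abs_le_rpow_exp (C := C^2) (p := η - 4*γ) (by linarith) (measPP η)
      (fun ρ hρ => abs_sq_mul_rpow_bound hρ hC (hCb ρ hρ).1 (by ring))
  have hI2 : IntegrableOn (fun ρ => psiF c γ ρ ^ 2 * ρ ^ (η - 2)) (Ioi (0:ℝ)) :=
    integrableOn_of_abs_le_rpow_exp (C := C^2) (p := η - 4*γ - 2) (by linarith) (measPP (η-2))
      (fun ρ hρ => abs_sq_mul_rpow_bound hρ hC (hCb ρ hρ).1 (by ring))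
  -- limits of the boundary terms
  have hLQ1 := tendsto_of_abs_le_rpow_exp (C := C^2) (p := η - 4*γ - 1) (by linarith)
    (fun ρ hρ => abs_sq_mul_rpow_bound (P := psiF' c γ ρ) (t := η+1) hρ hC (hCb ρ hρ).2 (by ring))
  have hLP1 := tendsto_of_abs_le_rpow_exp (C := C^2) (p := η - 4*γ + 1) (by linarith)
    (fun ρ hρ => abs_sq_mul_rpow_bound (P := psiF c γ ρ) (t := η+1) hρ hC (hCb ρ hρ).1 (by ring))
  have hLQP := tendsto_of_abs_le_rpow_exp (C := C^2) (p := η - 4*γ - 1) (by linarith)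
    (fun ρ hρ => abs_mul_mul_rpow_bound (P := psiF' c γ ρ) (Q := psiF c γ ρ) (t := η) hρ hC
      (hCb ρ hρ).2 (hCb ρ hρ).1 (by ring))
  have hLPP := tendsto_of_abs_le_rpow_exp (C := C^2) (p := η - 4*γ - 1) (by linarith)
    (fun ρ hρ => abs_sq_mul_rpow_bound (P := psiF c γ ρ) (t := η-1) hρ hC (hCb ρ hρ).1 (by ring))
  -- integration by parts A
  have hFA : ∀ ρ ∈ Ioi (0:ℝ), HasDerivAt
      (fun ρ => (psiF' c γ ρ ^ 2 * ρ ^ (η+1) - psiF c γ ρ ^ 2 * ρ ^ (η+1)) / 2)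
      (((η + 1) / 2 - (1 + 2 * γ)) * (psiF' c γ ρ ^ 2 * ρ ^ η)
        - (η + 1) / 2 * (psiF c γ ρ ^ 2 * ρ ^ η)) ρ := by
    intro ρ hρ
    have hρ0 : (0:ℝ) < ρ := hρ
    have hrp := Real.hasDerivAt_rpow_const (x := ρ) (p := η + 1) (Or.inl hρ0.ne')
    have h1 := (((hasDerivAt_psiF' c hγ0 hρ0).pow 2).mul hrp)
    have h2 := (((hasDerivAt_psiF c hγ0 hρ0).pow 2).mul hrp)
    have h := (h1.sub h2).div_const 2
    refine h.congr_deriv ?_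
    simp only [Pi.pow_apply, Pi.mul_apply]
    have hODE := ODE_psiF c hγ0 hρ0
    rw [hODE, show η + 1 - 1 = η by ring, Real.rpow_add_one hρ0.ne' η]
    push_cast
    field_simp
    ring
  have hGAint : IntegrableOn (fun ρ =>
      ((η + 1) / 2 - (1 + 2 * γ)) * (psiF' c γ ρ ^ 2 * ρ ^ η)
        - (η + 1) / 2 * (psiF c γ ρ ^ 2 * ρ ^ η)) (Ioi (0:ℝ)) :=
    (hI1.const_mul _).sub (hI0.const_mul _)
  have hFAlim0 : Tendsto (fun ρ => (psiF' c γ ρ ^ 2 * ρ ^ (η+1) - psiF c γ ρ ^ 2 * ρ ^ (η+1)) / 2)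
      (𝓝[>] (0:ℝ)) (𝓝 0) := by
    have := (hLQ1.1.sub hLP1.1).div_const 2
    simpa using this
  have hFAinf : Tendsto (fun ρ => (psiF' c γ ρ ^ 2 * ρ ^ (η+1) - psiF c γ ρ ^ 2 * ρ ^ (η+1)) / 2)
      atTop (𝓝 0) := by
    have := (hLQ1.2.sub hLP1.2).div_const 2
    simpa using this
  have hA : ∫ ρ in Ioi (0:ℝ),
      (((η + 1) / 2 - (1 + 2 * γ)) * (psiF' c γ ρ ^ 2 * ρ ^ η)
        - (η + 1) / 2 * (psiF c γ ρ ^ 2 * ρ ^ η)) = 0 := by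
    have := integral_Ioi_zero_eq_sub hFA hGAint hFAlim0 hFAinf
    simpa using this
  have EqA : ((η + 1) / 2 - (1 + 2 * γ)) * (∫ ρ in Ioi (0:ℝ), psiF' c γ ρ ^ 2 * ρ ^ η)
      = (η + 1) / 2 * (∫ ρ in Ioi (0:ℝ), psiF c γ ρ ^ 2 * ρ ^ η) := by
    have hsplit : ∫ ρ in Ioi (0:ℝ),
        (((η + 1) / 2 - (1 + 2 * γ)) * (psiF' c γ ρ ^ 2 * ρ ^ η)
          - (η + 1) / 2 * (psiF c γ ρ ^ 2 * ρ ^ η))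
        = ((η + 1) / 2 - (1 + 2 * γ)) * (∫ ρ in Ioi (0:ℝ), psiF' c γ ρ ^ 2 * ρ ^ η)
          - (η + 1) / 2 * (∫ ρ in Ioi (0:ℝ), psiF c γ ρ ^ 2 * ρ ^ η) := by
      rw [integral_sub (hI1.const_mul _) (hI0.const_mul _), integral_const_mul, integral_const_mul]
    rw [hsplit] at hA
    linarith
  -- integration by parts B
  have hFB : ∀ ρ ∈ Ioi (0:ℝ), HasDerivAt
      (fun ρ => psiF' c γ ρ * psiF c γ ρ * ρ ^ η
        - (η - (1 + 2 * γ)) / 2 * (psiF c γ ρ ^ 2 * ρ ^ (η - 1)))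
      (psiF' c γ ρ ^ 2 * ρ ^ η + psiF c γ ρ ^ 2 * ρ ^ η
        - (η - (1 + 2 * γ)) * ((η - 1) / 2) * (psiF c γ ρ ^ 2 * ρ ^ (η - 2))) ρ := by
    intro ρ hρ
    have hρ0 : (0:ℝ) < ρ := hρ
    have hrpη := Real.hasDerivAt_rpow_const (x := ρ) (p := η) (Or.inl hρ0.ne')
    have hrpη1 := Real.hasDerivAt_rpow_const (x := ρ) (p := η - 1) (Or.inl hρ0.ne')
    have h1 := (((hasDerivAt_psiF' c hγ0 hρ0).mul (hasDerivAt_psiF c hγ0 hρ0)).mul hrpη)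
    have h2 := ((((hasDerivAt_psiF c hγ0 hρ0).pow 2).mul hrpη1).const_mul
      ((η - (1 + 2 * γ)) / 2))
    have h := h1.sub h2
    refine h.congr_deriv ?_
    simp only [Pi.pow_apply, Pi.mul_apply]
    have hODE := ODE_psiF c hγ0 hρ0
    rw [hODE, show η - 1 - 1 = η - 2 by ring]
    have e1 : ρ ^ (η - 1) = ρ ^ η / ρ := Real.rpow_sub_one hρ0.ne' _
    have e2 : ρ ^ (η - 2) = ρ ^ η / ρ / ρ := by
      rw [show η - 2 = η - 1 - 1 by ring, Real.rpow_sub_one hρ0.ne', Real.rpow_sub_one hρ0.ne']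
    rw [e1, e2]
    push_cast
    field_simp
    ring
  have hGBint : IntegrableOn (fun ρ =>
      psiF' c γ ρ ^ 2 * ρ ^ η + psiF c γ ρ ^ 2 * ρ ^ η
        - (η - (1 + 2 * γ)) * ((η - 1) / 2) * (psiF c γ ρ ^ 2 * ρ ^ (η - 2))) (Ioi (0:ℝ)) :=
    (hI1.add hI0).sub (hI2.const_mul _)
  have hFBlim0 : Tendsto (fun ρ => psiF' c γ ρ * psiF c γ ρ * ρ ^ η
      - (η - (1 + 2 * γ)) / 2 * (psiF c γ ρ ^ 2 * ρ ^ (η - 1))) (𝓝[>] (0:ℝ)) (𝓝 0) := by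
    have := hLQP.1.sub (hLPP.1.const_mul ((η - (1 + 2 * γ)) / 2))
    simpa using this
  have hFBinf : Tendsto (fun ρ => psiF' c γ ρ * psiF c γ ρ * ρ ^ η
      - (η - (1 + 2 * γ)) / 2 * (psiF c γ ρ ^ 2 * ρ ^ (η - 1))) atTop (𝓝 0) := by
    have := hLQP.2.sub (hLPP.2.const_mul ((η - (1 + 2 * γ)) / 2))
    simpa using this
  have hB : ∫ ρ in Ioi (0:ℝ),
      (psiF' c γ ρ ^ 2 * ρ ^ η + psiF c γ ρ ^ 2 * ρ ^ η
        - (η - (1 + 2 * γ)) * ((η - 1) / 2) * (psiF c γ ρ ^ 2 * ρ ^ (η - 2))) = 0 := by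
    have := integral_Ioi_zero_eq_sub hFB hGBint hFBlim0 hFBinf
    simpa using this
  have EqB : (∫ ρ in Ioi (0:ℝ), psiF' c γ ρ ^ 2 * ρ ^ η)
      + (∫ ρ in Ioi (0:ℝ), psiF c γ ρ ^ 2 * ρ ^ η)
      = (η - (1 + 2 * γ)) * ((η - 1) / 2) * (∫ ρ in Ioi (0:ℝ), psiF c γ ρ ^ 2 * ρ ^ (η - 2)) := by
    have hsplit : ∫ ρ in Ioi (0:ℝ),
        (psiF' c γ ρ ^ 2 * ρ ^ η + psiF c γ ρ ^ 2 * ρ ^ η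
          - (η - (1 + 2 * γ)) * ((η - 1) / 2) * (psiF c γ ρ ^ 2 * ρ ^ (η - 2)))
        = ((∫ ρ in Ioi (0:ℝ), psiF' c γ ρ ^ 2 * ρ ^ η)
            + (∫ ρ in Ioi (0:ℝ), psiF c γ ρ ^ 2 * ρ ^ η))
          - (η - (1 + 2 * γ)) * ((η - 1) / 2)
            * (∫ ρ in Ioi (0:ℝ), psiF c γ ρ ^ 2 * ρ ^ (η - 2)) := by
      have hI10 : IntegrableOn (fun ρ =>
          psiF' c γ ρ ^ 2 * ρ ^ η + psiF c γ ρ ^ 2 * ρ ^ η) (Ioi (0:ℝ)) := hI1.add hI0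
      rw [integral_sub hI10 (hI2.const_mul _), integral_add hI1 hI0, integral_const_mul]
    rw [hsplit] at hB
    linarith
  -- translate the statement
  have hint_eq : (∫ ρ in Ioi (0:ℝ), (deriv (psiK n γ) ρ) ^ 2 * ρ ^ η)
      = ∫ ρ in Ioi (0:ℝ), psiF' c γ ρ ^ 2 * ρ ^ η :=
    setIntegral_congr_fun measurableSet_Ioi (fun ρ hρ => by rw [hderiv ρ hρ])
  refine ⟨?_, ?_, ?_, ?_, ?_⟩
  · exact IntegrableOn.congr_fun hI1 (fun ρ hρ => by rw [hderiv ρ hρ]) measurableSet_Ioi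
  · rw [hψ]; exact hI0
  · rw [hψ]; exact hI2
  · rw [hint_eq, hψ]; exact EqA
  · rw [hψ]
    have hpos : (0:ℝ) < (η + 1) / 2 - (1 + 2 * γ) := by linarith
    have hane : ((η + 1) / 2 - (1 + 2 * γ)) ≠ 0 := ne_of_gt hpos
    have haa : (0:ℝ) < (η + 1) / 2 := by linarith
    have hD : (0:ℝ) < 1 + ((η + 1) / 2) * ((η + 1) / 2 - (1 + 2 * γ))⁻¹ := by positivity
    have hDne := ne_of_gt hD
    set I1 := ∫ ρ in Ioi (0:ℝ), psiF' c γ ρ ^ 2 * ρ ^ η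
    set I0 := ∫ ρ in Ioi (0:ℝ), psiF c γ ρ ^ 2 * ρ ^ η
    set I2 := ∫ ρ in Ioi (0:ℝ), psiF c γ ρ ^ 2 * ρ ^ (η - 2)
    have h1 : (η + 1) / 2 * ((η + 1) / 2 - (1 + 2 * γ))⁻¹ * I0 = I1 := by
      rw [mul_comm ((η + 1) / 2) (((η + 1) / 2 - (1 + 2 * γ))⁻¹), mul_assoc, ← EqA,
        ← mul_assoc, inv_mul_cancel₀ hane, one_mul]
    have hDI : (1 + (η + 1) / 2 * ((η + 1) / 2 - (1 + 2 * γ))⁻¹) * I0 = I1 + I0 := by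
      have h2 : (1 + (η + 1) / 2 * ((η + 1) / 2 - (1 + 2 * γ))⁻¹) * I0
          = I0 + (η + 1) / 2 * ((η + 1) / 2 - (1 + 2 * γ))⁻¹ * I0 := by ring
      rw [h2, h1]; ring
    calc I0 = (1 + (η + 1) / 2 * ((η + 1) / 2 - (1 + 2 * γ))⁻¹)⁻¹
          * ((1 + (η + 1) / 2 * ((η + 1) / 2 - (1 + 2 * γ))⁻¹) * I0) := by
          rw [← mul_assoc, inv_mul_cancel₀ hDne, one_mul]
      _ = (1 + (η + 1) / 2 * ((η + 1) / 2 - (1 + 2 * γ))⁻¹)⁻¹ * (I1 + I0) := by rw [hDI]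
      _ = (1 + (η + 1) / 2 * ((η + 1) / 2 - (1 + 2 * γ))⁻¹)⁻¹
          * ((η - (1 + 2 * γ)) * ((η - 1) / 2) * I2) := by rw [EqB]
      _ = (η - (1 + 2 * γ)) * ((η - 1) / 2)
          * (1 + (η + 1) / 2 * ((η + 1) / 2 - (1 + 2 * γ))⁻¹)⁻¹ * I2 := by ring


end MAIN

end
end

section
/- For every τ = (τ¹,…,τⁿ) ∈ ℝⁿ and every integer t with 0 ≤ t ≤ 4, one has Σ_{i,j,k,l=1}^n W_{ikjl} ∫_{S^{n-1}} x^i x^j (x^k + τ^k)(x^l + τ^l) (x̄ · τ)^t dS = 0. -/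
open MeasureTheory Real Filter Topology

noncomputable section

/-- The tensor `H_{ij}(x̄) = Σ_{k,l} W_{ikjl} x^k x^l`. -/
def Hten (n : ℕ) (W4 : Fin n → Fin n → Fin n → Fin n → ℝ) (i j : Fin n)
    (x : EuclideanSpace ℝ (Fin n)) : ℝ :=
  ∑ k, ∑ l, W4 i k j l * x k * x l

/-- The squared tensor norm `|W|² = Σ (W_{ikjl} + W_{iljk})²`. -/
def normWsq (n : ℕ) (W4 : Fin n → Fin n → Fin n → Fin n → ℝ) : ℝ :=
  ∑ i, ∑ j, ∑ k, ∑ l, (W4 i k j l + W4 i l j k) ^ 2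

/-- The symmetric two-tensor `W̃_{ij} = Σ_{k,p,q}(W_{ikpq}+W_{kqip})(W_{jkpq}+W_{kqjp})`. -/
def Wtil (n : ℕ) (W4 : Fin n → Fin n → Fin n → Fin n → ℝ) (i j : Fin n) : ℝ :=
  ∑ k, ∑ p, ∑ q, (W4 i k p q + W4 k q i p) * (W4 j k p q + W4 k q j p)

/-- The partial derivative `∂_k f`. -/
def pd (n : ℕ) (k : Fin n) (f : EuclideanSpace ℝ (Fin n) → ℝ) :
    EuclideanSpace ℝ (Fin n) → ℝ :=
  fun x => fderiv ℝ f x (EuclideanSpace.single k 1)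

/-- The Euclidean Laplacian `Δf = Σ_k ∂_k∂_k f`. -/
def lapl (n : ℕ) (f : EuclideanSpace ℝ (Fin n) → ℝ) :
    EuclideanSpace ℝ (Fin n) → ℝ :=
  fun x => ∑ k, pd n k (pd n k f) x

/-- The tensor `h̄_{ij}(x̄) = f(|x̄|²) H_{ij}(x̄)`. -/
def hbar (n : ℕ) (W4 : Fin n → Fin n → Fin n → Fin n → ℝ) (f : Polynomial ℝ)
    (i j : Fin n) (x : EuclideanSpace ℝ (Fin n)) : ℝ :=
  Polynomial.eval (‖x‖ ^ 2) f * Hten n W4 i j x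

section Helpers
open Metric Set
open scoped NNReal ENNReal


lemma lipsOn_normalize {E : Type*} [NormedAddCommGroup E] [NormedSpace ℝ E] :
    LipschitzOnWith 2 (fun x : E => ‖x‖⁻¹ • x) {x : E | 1 ≤ ‖x‖} := by
  apply LipschitzOnWith.of_dist_le_mul
  intro x hx y hy
  simp only [Set.mem_setOf_eq] at hx hy
  rw [dist_eq_norm, dist_eq_norm]
  have hx0 : (0:ℝ) < ‖x‖ := lt_of_lt_of_le one_pos hx
  have hy0 : (0:ℝ) < ‖y‖ := lt_of_lt_of_le one_pos hy
  have h1 : ‖x‖⁻¹ • x - ‖y‖⁻¹ • y = ‖x‖⁻¹ • (x - y) + (‖x‖⁻¹ - ‖y‖⁻¹) • y := by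
    rw [smul_sub, sub_smul]; abel
  rw [h1]
  have h2 := norm_add_le (‖x‖⁻¹ • (x - y)) ((‖x‖⁻¹ - ‖y‖⁻¹) • y)
  rw [norm_smul, norm_smul] at h2
  have h3 : ‖(‖x‖⁻¹ : ℝ)‖ = ‖x‖⁻¹ := by
    rw [Real.norm_eq_abs, abs_of_pos (inv_pos.2 hx0)]
  have h4 : ‖(‖x‖⁻¹ - ‖y‖⁻¹ : ℝ)‖ = |‖y‖ - ‖x‖| * (‖x‖⁻¹ * ‖y‖⁻¹) := by
    rw [Real.norm_eq_abs]
    rw [show ‖x‖⁻¹ - ‖y‖⁻¹ = (‖y‖ - ‖x‖) * (‖x‖⁻¹ * ‖y‖⁻¹) by field_simp]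
    rw [abs_mul, abs_of_pos (show (0:ℝ) < ‖x‖⁻¹ * ‖y‖⁻¹ by positivity)]
  have h5 : |‖y‖ - ‖x‖| ≤ ‖x - y‖ := by
    rw [norm_sub_rev]; exact abs_norm_sub_norm_le y x
  have hxy : (0:ℝ) ≤ ‖x - y‖ := norm_nonneg _
  have hinvx : ‖x‖⁻¹ ≤ 1 := by
    rw [inv_le_one_iff₀]; right; exact hx
  have hinvy : ‖y‖⁻¹ ≤ 1 := by
    rw [inv_le_one_iff₀]; right; exact hy
  rw [h3, h4] at h2
  have : |‖y‖ - ‖x‖| * (‖x‖⁻¹ * ‖y‖⁻¹) * ‖y‖ ≤ ‖x - y‖ := by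
    have hy' : ‖x‖⁻¹ * ‖y‖⁻¹ * ‖y‖ = ‖x‖⁻¹ := by field_simp
    calc |‖y‖ - ‖x‖| * (‖x‖⁻¹ * ‖y‖⁻¹) * ‖y‖ = |‖y‖ - ‖x‖| * ‖x‖⁻¹ := by
          rw [mul_assoc, hy']
      _ ≤ ‖x - y‖ * 1 := by
          apply mul_le_mul h5 hinvx (by positivity) hxy
      _ = ‖x - y‖ := mul_one _
  have h6 : ‖x‖⁻¹ * ‖x - y‖ ≤ ‖x - y‖ := by nlinarith
  push_cast
  nlinarith

/-- The embedding of `ℝ^N` as the affine hyperplane `xₘ = 1` in Euclidean space. -/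
def embE (N : ℕ) (m : Fin (N+1)) (y : Fin N → ℝ) : EuclideanSpace ℝ (Fin (N+1)) :=
  (WithLp.equiv 2 _).symm (m.insertNth 1 y)

lemma embE_apply_same (N : ℕ) (m : Fin (N+1)) (y : Fin N → ℝ) : embE N m y m = 1 := by
  simp [embE, Fin.insertNth_apply_same]

lemma embE_apply_succAbove (N : ℕ) (m : Fin (N+1)) (y : Fin N → ℝ) (j : Fin N) :
    embE N m y (m.succAbove j) = y j := by
  simp [embE, Fin.insertNth_apply_succAbove]

lemma embE_lip (N : ℕ) (m : Fin (N+1)) : LipschitzWith ((N:ℝ≥0)+1) (embE N m) := by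
  apply LipschitzWith.of_dist_le_mul
  intro y z
  rw [EuclideanSpace.dist_eq]
  have hd : (0:ℝ) ≤ dist y z := dist_nonneg
  have hsum : ∑ i, dist (embE N m y i) (embE N m z i) ^ 2
      = ∑ j, dist (y j) (z j) ^ 2 := by
    rw [Fin.sum_univ_succAbove _ m]
    simp [embE_apply_same, embE_apply_succAbove]
  rw [hsum]
  have hle : ∑ j, dist (y j) (z j) ^ 2 ≤ (N:ℝ) * dist y z ^ 2 := by
    calc ∑ j, dist (y j) (z j) ^ 2 ≤ ∑ _j : Fin N, dist y z ^ 2 := by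
          apply Finset.sum_le_sum
          intro j _
          have := dist_le_pi_dist y z j
          nlinarith [dist_nonneg (x := y j) (y := z j)]
      _ = (N:ℝ) * dist y z ^ 2 := by simp [Finset.sum_const, mul_comm]
  have hcast : ((((N:ℝ≥0)+1) : ℝ≥0) : ℝ) = (N:ℝ) + 1 := by push_cast; ring
  rw [hcast]
  have h2 : ∑ j, dist (y j) (z j) ^ 2 ≤ (((N:ℝ)+1) * dist y z) ^ 2 := by nlinarith
  calc √(∑ j, dist (y j) (z j) ^ 2) ≤ √((((N:ℝ)+1) * dist y z) ^ 2) := Real.sqrt_le_sqrt h2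
    _ = ((N:ℝ)+1) * dist y z := Real.sqrt_sq (by positivity)

lemma one_le_norm_embE (N : ℕ) (m : Fin (N+1)) (y : Fin N → ℝ) : 1 ≤ ‖embE N m y‖ := by
  rw [EuclideanSpace.norm_eq, show (1:ℝ) = √1 by simp]
  apply Real.sqrt_le_sqrt
  have : ‖embE N m y m‖ ^ 2 = 1 := by rw [embE_apply_same]; norm_num
  rw [← this]
  exact Finset.single_le_sum (f := fun i => ‖embE N m y i‖ ^ 2)
    (fun j _ => sq_nonneg _) (Finset.mem_univ m)

lemma abs_coord_le_norm {k : ℕ} (x : EuclideanSpace ℝ (Fin k)) (i : Fin k) : |x i| ≤ ‖x‖ := by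
  rw [EuclideanSpace.norm_eq, ← Real.sqrt_sq_eq_abs]
  apply Real.sqrt_le_sqrt
  have : |x i| ^ 2 = ‖x i‖ ^ 2 := by rw [Real.norm_eq_abs]
  rw [← sq_abs, this]
  exact Finset.single_le_sum (f := fun j => ‖x j‖ ^ 2)
    (fun j _ => sq_nonneg _) (Finset.mem_univ i)

lemma sphere_hausdorff_ne_top (N : ℕ) :
    μH[(N:ℝ)] (Metric.sphere (0 : EuclideanSpace ℝ (Fin (N+1))) 1) ≠ ⊤ := by
  classical
  set E := EuclideanSpace ℝ (Fin (N+1))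
  set K : Set (Fin N → ℝ) := Metric.closedBall 0 (√(N+1)) with hK
  set φ : Fin (N+1) → (Fin N → ℝ) → E := fun m => (fun x : E => ‖x‖⁻¹ • x) ∘ embE N m with hφ
  -- coverage
  have hcover : Metric.sphere (0 : E) 1 ⊆
      ⋃ m : Fin (N+1), (φ m '' K ∪ (fun v : E => -v) ∘ (φ m) '' K) := by
    intro x hx
    rw [mem_sphere_zero_iff_norm] at hx
    have hsum : ∑ i, (x i) ^ 2 = 1 := by
      have h := EuclideanSpace.norm_eq x
      rw [hx] at h
      have h2 : (1:ℝ) = √(∑ i, ‖x i‖ ^ 2) := h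
      have h3 : ∑ i, ‖x i‖ ^ 2 = ∑ i, (x i) ^ 2 := by
        apply Finset.sum_congr rfl; intro i _; rw [Real.norm_eq_abs, sq_abs]
      nlinarith [Real.sq_sqrt (show (0:ℝ) ≤ ∑ i, ‖x i‖^2 by positivity),
        Real.sqrt_nonneg (∑ i, ‖x i‖^2)]
    obtain ⟨m, _, hm⟩ : ∃ m ∈ Finset.univ, (1:ℝ)/(N+1) ≤ (x m)^2 := by
      apply Finset.exists_le_of_sum_le Finset.univ_nonempty
      rw [hsum]
      rw [Finset.sum_const, Finset.card_univ, Fintype.card_fin]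
      rw [nsmul_eq_mul, mul_one_div]
      apply le_of_eq
      rw [div_eq_one_iff_eq (by positivity)]
      push_cast
      ring
    have hc0 : x m ≠ 0 := by
      intro h; rw [h] at hm; norm_num at hm
      nlinarith [hm]
    set c := x m with hc
    set y : Fin N → ℝ := fun j => x (m.succAbove j) / c with hy
    have hyx : embE N m y = c⁻¹ • x := by
      ext i
      rcases eq_or_ne i m with rfl | him
      · rw [embE_apply_same]
        show (1:ℝ) = c⁻¹ * x i
        rw [inv_mul_cancel₀ hc0]
      · obtain ⟨j, rfl⟩ := Fin.exists_succAbove_eq him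
        rw [embE_apply_succAbove]
        show x (m.succAbove j) / c = c⁻¹ * x (m.succAbove j)
        rw [div_eq_inv_mul]
    have hnorm : ‖embE N m y‖ = |c|⁻¹ := by
      rw [hyx, norm_smul, hx, Real.norm_eq_abs, abs_inv, mul_one]
    have hyK : y ∈ K := by
      rw [hK, Metric.mem_closedBall, dist_zero_right]
      apply (pi_norm_le_iff_of_nonneg (Real.sqrt_nonneg _)).2
      intro j
      rw [hy]
      have h1 : |x (m.succAbove j)| ≤ 1 := by rw [← hx]; exact abs_coord_le_norm x _
      rw [div_le_iff₀ (by positivity)] at hm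
      have h2 : (1:ℝ) ≤ √(N+1) * |c| := by
        have h21 : √1 ≤ √(((N:ℝ)+1) * c^2) := Real.sqrt_le_sqrt (by nlinarith)
        rw [Real.sqrt_one] at h21
        calc (1:ℝ) ≤ √(((N:ℝ)+1) * c^2) := h21
          _ = √((N:ℝ)+1) * √(c^2) := Real.sqrt_mul (by positivity) _
          _ = √((N:ℝ)+1) * |c| := by rw [Real.sqrt_sq_eq_abs]
      rw [Real.norm_eq_abs, abs_div]
      rw [div_le_iff₀ (abs_pos.2 hc0)]
      nlinarith [Real.sqrt_nonneg ((N:ℝ)+1), abs_nonneg c]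
    have hφx : φ m y = (|c| * c⁻¹) • x := by
      rw [hφ]
      show ‖embE N m y‖⁻¹ • (embE N m y) = (|c| * c⁻¹) • x
      rw [hnorm, hyx, inv_inv, smul_smul]
    apply Set.mem_iUnion.2 ⟨m, ?_⟩
    rcases abs_cases c with ⟨habs, _⟩ | ⟨habs, _⟩
    · left
      refine ⟨y, hyK, ?_⟩
      rw [hφx, habs, mul_inv_cancel₀ hc0, one_smul]
    · right
      refine ⟨y, hyK, ?_⟩
      show -(φ m y) = x
      rw [hφx, habs]
      rw [show -c * c⁻¹ = -1 by field_simp]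
      simp
      exact neg_neg x
  -- measure bound
  have hKfin : μH[(N:ℝ)] K ≠ ⊤ := by
    have hcard : ((Fintype.card (Fin N) : ℝ)) = (N:ℝ) := by simp
    rw [← hcard, hausdorffMeasure_pi_real]
    exact ((isCompact_closedBall _ _).measure_lt_top).ne
  have hd0 : (0:ℝ) ≤ (N:ℝ) := by positivity
  have hmaps : ∀ m, Set.MapsTo (embE N m) K {x : E | 1 ≤ ‖x‖} := by
    intro m y _
    exact one_le_norm_embE N m y
  have hlip : ∀ m, LipschitzOnWith (2 * ((N:ℝ≥0)+1)) (φ m) K :=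
    fun m => lipsOn_normalize.comp (embE_lip N m).lipschitzOnWith (hmaps m)
  have hlipneg : ∀ m, LipschitzOnWith (1 * (2 * ((N:ℝ≥0)+1))) ((fun v : E => -v) ∘ (φ m)) K :=
    fun m => ((isometry_neg : Isometry (Neg.neg : E → E)).lipschitz).comp_lipschitzOnWith (hlip m)
  apply ne_of_lt
  calc μH[(N:ℝ)] (Metric.sphere (0:E) 1)
      ≤ μH[(N:ℝ)] (⋃ m : Fin (N+1), (φ m '' K ∪ (fun v : E => -v) ∘ (φ m) '' K)) :=
        measure_mono hcover
    _ ≤ ∑ m : Fin (N+1), μH[(N:ℝ)] (φ m '' K ∪ (fun v : E => -v) ∘ (φ m) '' K) :=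
        measure_iUnion_fintype_le _ _
    _ < ⊤ := by
        apply ENNReal.sum_lt_top.2
        intro m _
        apply lt_of_le_of_lt (measure_union_le _ _)
        apply ENNReal.add_lt_top.2
        constructor
        · apply lt_of_le_of_lt ((hlip m).hausdorffMeasure_image_le hd0)
          exact ENNReal.mul_lt_top (ENNReal.rpow_lt_top_of_nonneg hd0 ENNReal.coe_ne_top)
            hKfin.lt_top
        · apply lt_of_le_of_lt ((hlipneg m).hausdorffMeasure_image_le hd0)
          exact ENNReal.mul_lt_top (ENNReal.rpow_lt_top_of_nonneg hd0 ENNReal.coe_ne_top)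
            hKfin.lt_top

lemma sphere_hausdorff_ne_top' {n : ℕ} (hn : 2 ≤ n) :
    μH[(n:ℝ)-1] (Metric.sphere (0 : EuclideanSpace ℝ (Fin n)) 1) ≠ ⊤ := by
  obtain ⟨N, rfl⟩ : ∃ N, n = N + 1 := ⟨n-1, by omega⟩
  rw [show ((N+1:ℕ):ℝ) - 1 = (N:ℝ) by push_cast; ring]
  exact sphere_hausdorff_ne_top N

lemma integrableOn_sphere {n : ℕ} (hn : 2 ≤ n) {f : EuclideanSpace ℝ (Fin n) → ℝ}
    (hf : Continuous f) :
    IntegrableOn f (Metric.sphere (0 : EuclideanSpace ℝ (Fin n)) 1) μH[(n:ℝ)-1] := by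
  obtain ⟨C, hC⟩ := (isCompact_sphere (0 : EuclideanSpace ℝ (Fin n)) 1).exists_bound_of_continuousOn
    hf.continuousOn
  apply Measure.integrableOn_of_bounded (sphere_hausdorff_ne_top' hn) hf.aestronglyMeasurable
  filter_upwards [ae_restrict_mem isClosed_sphere.measurableSet] with x hx
  exact hC x hx

lemma sphere_integral_comp {n : ℕ} (d : ℝ)
    (e : EuclideanSpace ℝ (Fin n) ≃ₗᵢ[ℝ] EuclideanSpace ℝ (Fin n))
    (f : EuclideanSpace ℝ (Fin n) → ℝ) :
    ∫ x in Metric.sphere (0 : EuclideanSpace ℝ (Fin n)) 1, f (e x) ∂μH[d]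
      = ∫ x in Metric.sphere (0 : EuclideanSpace ℝ (Fin n)) 1, f x ∂μH[d] := by
  have hmp := e.toIsometryEquiv.measurePreserving_hausdorffMeasure d
  have hemb := e.toIsometryEquiv.toHomeomorph.measurableEmbedding
  have hpre : ⇑e ⁻¹' Metric.sphere (0 : EuclideanSpace ℝ (Fin n)) 1
      = Metric.sphere (0 : EuclideanSpace ℝ (Fin n)) 1 := by
    ext x
    simp only [Set.mem_preimage, mem_sphere_zero_iff_norm, e.norm_map]
  calc ∫ x in Metric.sphere (0 : EuclideanSpace ℝ (Fin n)) 1, f (e x) ∂μH[d]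
      = ∫ x in ⇑e ⁻¹' Metric.sphere (0 : EuclideanSpace ℝ (Fin n)) 1, f (e x) ∂μH[d] := by
        rw [hpre]
    _ = ∫ x in Metric.sphere (0 : EuclideanSpace ℝ (Fin n)) 1, f x ∂μH[d] :=
        hmp.setIntegral_preimage_emb hemb f _

/-- Reflection of the `m`-th coordinate as a linear isometry equivalence. -/
def negCoord {n : ℕ} (m : Fin n) :
    EuclideanSpace ℝ (Fin n) ≃ₗᵢ[ℝ] EuclideanSpace ℝ (Fin n) :=
  LinearIsometryEquiv.piLpCongrRight 2
    (fun i => if i = m then (LinearIsometryEquiv.neg ℝ : ℝ ≃ₗᵢ[ℝ] ℝ) else LinearIsometryEquiv.refl ℝ ℝ)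

lemma negCoord_apply {n : ℕ} (m : Fin n) (x : EuclideanSpace ℝ (Fin n)) (i : Fin n) :
    negCoord m x i = if i = m then -x i else x i := by
  unfold negCoord
  rw [LinearIsometryEquiv.piLpCongrRight_apply]
  by_cases h : i = m <;> simp [h] <;> subst h <;> rfl

/-- Transposition of two coordinates as a linear isometry equivalence. -/
def swapCoord {n : ℕ} (p q : Fin n) :
    EuclideanSpace ℝ (Fin n) ≃ₗᵢ[ℝ] EuclideanSpace ℝ (Fin n) :=
  LinearIsometryEquiv.piLpCongrLeft 2 ℝ ℝ (Equiv.swap p q)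

lemma swapCoord_apply {n : ℕ} (p q : Fin n) (x : EuclideanSpace ℝ (Fin n)) (i : Fin n) :
    swapCoord p q x i = x (Equiv.swap p q i) := by
  unfold swapCoord
  rw [LinearIsometryEquiv.piLpCongrLeft_apply]
  show x ((Equiv.swap p q).symm i) = x (Equiv.swap p q i)
  rw [Equiv.symm_swap]

lemma contCoord {n : ℕ} (i : Fin n) : Continuous fun x : EuclideanSpace ℝ (Fin n) => x i :=
  (EuclideanSpace.proj i).continuous

/-- An integral over the sphere of a function odd in one coordinate vanishes. -/
lemma integral_odd {n : ℕ} (d : ℝ) (r : Fin n) (f : EuclideanSpace ℝ (Fin n) → ℝ)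
    (hf : ∀ x, f (negCoord r x) = - f x) :
    ∫ x in Metric.sphere (0 : EuclideanSpace ℝ (Fin n)) 1, f x ∂μH[d] = 0 := by
  have h := sphere_integral_comp d (negCoord r) f
  simp only [hf] at h
  rw [integral_neg] at h
  linarith

lemma J_offdiag {n : ℕ} [NeZero n] (d : ℝ) (p q : Fin n) (hpq : p ≠ q) (t : ℕ) :
    ∫ x in Metric.sphere (0 : EuclideanSpace ℝ (Fin n)) 1,
      x p * x q * (x 0) ^ t ∂μH[d] = 0 := by
  -- reduce to the case `p ≠ 0`
  rcases eq_or_ne p 0 with rfl | hp0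
  · apply integral_odd d q (fun x => x 0 * x q * (x 0) ^ t)
    intro x
    show (negCoord q x) 0 * (negCoord q x) q * ((negCoord q x) 0) ^ t
        = -(x 0 * x q * (x 0) ^ t)
    rw [negCoord_apply q x 0, negCoord_apply q x q, if_neg hpq, if_pos rfl]
    ring
  · apply integral_odd d p (fun x => x p * x q * (x 0) ^ t)
    intro x
    show (negCoord p x) p * (negCoord p x) q * ((negCoord p x) 0) ^ t
        = -(x p * x q * (x 0) ^ t)
    rw [negCoord_apply p x p, negCoord_apply p x q, negCoord_apply p x 0,
      if_pos rfl, if_neg (Ne.symm hpq), if_neg (Ne.symm hp0)]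
    ring

lemma J_diag {n : ℕ} [NeZero n] (d : ℝ) (p q : Fin n) (hp : p ≠ 0) (hq : q ≠ 0) (t : ℕ) :
    ∫ x in Metric.sphere (0 : EuclideanSpace ℝ (Fin n)) 1, x p * x p * (x 0) ^ t ∂μH[d]
      = ∫ x in Metric.sphere (0 : EuclideanSpace ℝ (Fin n)) 1, x q * x q * (x 0) ^ t ∂μH[d] := by
  rw [← sphere_integral_comp d (swapCoord p q) (fun x => x q * x q * (x 0) ^ t)]
  apply setIntegral_congr_fun isClosed_sphere.measurableSet
  intro x _
  show x p * x p * (x 0) ^ t = (swapCoord p q x) q * (swapCoord p q x) q * ((swapCoord p q x) 0) ^ t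
  rw [swapCoord_apply p q x q, swapCoord_apply p q x 0, Equiv.swap_apply_right,
    Equiv.swap_apply_of_ne_of_ne (Ne.symm hp) (Ne.symm hq)]

lemma sum3_swap13 {n : ℕ} (H : Fin n → Fin n → Fin n → ℝ) :
    ∑ a, ∑ b, ∑ c, H a b c = ∑ c, ∑ b, ∑ a, H a b c := by
  calc ∑ a, ∑ b, ∑ c, H a b c
      = ∑ a, ∑ c, ∑ b, H a b c := Finset.sum_congr rfl fun a _ => Finset.sum_comm
    _ = ∑ c, ∑ a, ∑ b, H a b c := Finset.sum_comm
    _ = ∑ c, ∑ b, ∑ a, H a b c := Finset.sum_congr rfl fun c _ => Finset.sum_comm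

lemma sum4_reorder {n : ℕ} (H : Fin n → Fin n → Fin n → Fin n → ℝ) :
    ∑ i, ∑ j, ∑ p, ∑ q, H i j p q = ∑ p, ∑ q, ∑ i, ∑ j, H i j p q := by
  calc ∑ i, ∑ j, ∑ p, ∑ q, H i j p q
      = ∑ i, ∑ p, ∑ j, ∑ q, H i j p q := Finset.sum_congr rfl fun i _ => Finset.sum_comm
    _ = ∑ p, ∑ i, ∑ j, ∑ q, H i j p q := Finset.sum_comm
    _ = ∑ p, ∑ i, ∑ q, ∑ j, H i j p q :=
        Finset.sum_congr rfl fun p _ => Finset.sum_congr rfl fun i _ => Finset.sum_comm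
    _ = ∑ p, ∑ q, ∑ i, ∑ j, H i j p q := Finset.sum_congr rfl fun p _ => Finset.sum_comm

lemma sum2_antisym {n : ℕ} (M : Fin n → Fin n → ℝ) (h : ∀ a b, M a b = -M b a) :
    ∑ a, ∑ b, M a b = 0 := by
  have h1 : ∑ a, ∑ b, M a b = ∑ a, ∑ b, -M b a :=
    Finset.sum_congr rfl fun a _ => Finset.sum_congr rfl fun b _ => h a b
  have h2 : ∑ a : Fin n, ∑ b, -M b a = -∑ a : Fin n, ∑ b, M b a := by
    simp [Finset.sum_neg_distrib]
  have h3 : ∑ a : Fin n, ∑ b, M b a = ∑ a, ∑ b, M a b := Finset.sum_comm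
  rw [h1, h2, h3] at *
  linarith [h1]

lemma sum4_antisym13 {n : ℕ} (G : Fin n → Fin n → Fin n → Fin n → ℝ)
    (hG : ∀ i j k l, G i j k l = -G k j i l) :
    ∑ i, ∑ j, ∑ k, ∑ l, G i j k l = 0 := by
  have h1 : ∑ i, ∑ j, ∑ k, ∑ l, G i j k l = ∑ i, ∑ j, ∑ k, ∑ l, -G k j i l :=
    Finset.sum_congr rfl fun i _ => Finset.sum_congr rfl fun j _ =>
      Finset.sum_congr rfl fun k _ => Finset.sum_congr rfl fun l _ => hG i j k l
  have h2 : ∑ i : Fin n, ∑ j, ∑ k, ∑ l : Fin n, -G k j i l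
      = -∑ i : Fin n, ∑ j, ∑ k, ∑ l : Fin n, G k j i l := by simp
  have h3 : ∑ i : Fin n, ∑ j, ∑ k, ∑ l : Fin n, G k j i l
      = ∑ i, ∑ j, ∑ k, ∑ l, G i j k l := sum3_swap13 (fun i j k => ∑ l, G k j i l)
  have := h1
  rw [h2, h3] at this
  linarith

lemma sum4_antisym24 {n : ℕ} (G : Fin n → Fin n → Fin n → Fin n → ℝ)
    (hG : ∀ i j k l, G i j k l = -G i l k j) :
    ∑ i, ∑ j, ∑ k, ∑ l, G i j k l = 0 := by
  have h1 : ∑ i, ∑ j, ∑ k, ∑ l, G i j k l = ∑ i, ∑ j, ∑ k, ∑ l, -G i l k j :=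
    Finset.sum_congr rfl fun i _ => Finset.sum_congr rfl fun j _ =>
      Finset.sum_congr rfl fun k _ => Finset.sum_congr rfl fun l _ => hG i j k l
  have h2 : ∑ i : Fin n, ∑ j, ∑ k, ∑ l : Fin n, -G i l k j
      = -∑ i : Fin n, ∑ j, ∑ k, ∑ l : Fin n, G i l k j := by simp
  have h3 : ∀ i : Fin n, ∑ j : Fin n, ∑ k, ∑ l : Fin n, G i l k j
      = ∑ j, ∑ k, ∑ l, G i j k l := fun i => sum3_swap13 (fun j k l => G i l k j)
  have := h1
  rw [h2] at this
  rw [Finset.sum_congr rfl (fun i _ => h3 i)] at this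
  linarith

lemma euclid_decomp {n : ℕ} (y : EuclideanSpace ℝ (Fin n)) :
    ∑ p, y p • EuclideanSpace.single p (1:ℝ) = y := by
  ext i
  have h : (∑ p, y p • EuclideanSpace.single p (1:ℝ)) i
      = ∑ p, (y p • EuclideanSpace.single p (1:ℝ)) i := by rw [WithLp.ofLp_sum, Finset.sum_apply]
  rw [h]
  simp [EuclideanSpace.single_apply]

lemma inner_eq_sum {n : ℕ} (x y : EuclideanSpace ℝ (Fin n)) :
    inner ℝ x y = ∑ i, x i * y i := by
  simp [PiLp.inner_apply, RCLike.inner_apply, conj_trivial, mul_comm]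

end Helpers

theorem stmt_13 (n : ℕ) (hn : 2 ≤ n) (W4 : Fin n → Fin n → Fin n → Fin n → ℝ)
    (hanti1 : ∀ i j k l, W4 i j k l = -W4 j i k l)
    (hanti2 : ∀ i j k l, W4 i j k l = -W4 i j l k)
    (hsymm : ∀ i j k l, W4 i j k l = W4 k l i j)
    (hbianchi : ∀ i j k l, W4 i j k l + W4 i k l j + W4 i l j k = 0)
    (htrace : ∀ j k, ∑ i, W4 i j i k = 0) :
    ∀ τ : EuclideanSpace ℝ (Fin n), ∀ t : ℕ, t ≤ 4 →
      (∑ i, ∑ j, ∑ k, ∑ l, W4 i k j l *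
        ∫ x in Metric.sphere (0 : EuclideanSpace ℝ (Fin n)) 1,
          x i * x j * (x k + τ k) * (x l + τ l) * (∑ i', x i' * τ i') ^ t
            ∂μH[(n : ℝ) - 1]) = 0 := by
  intro τ t _
  haveI : NeZero n := ⟨by omega⟩
  set S := Metric.sphere (0 : EuclideanSpace ℝ (Fin n)) 1 with hS
  set d : ℝ := (n : ℝ) - 1 with hd
  have hPc : Continuous fun x : EuclideanSpace ℝ (Fin n) => (∑ i', x i' * τ i') ^ t :=
    (continuous_finset_sum _ fun i _ => (contCoord i).mul continuous_const).pow t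
  have hint : ∀ f : EuclideanSpace ℝ (Fin n) → ℝ, Continuous f →
      Integrable f (μH[d].restrict S) := fun f hf => integrableOn_sphere hn hf
  -- step 1 : split each integral into four pieces
  have hsplit : ∀ i j k l : Fin n,
      (∫ x in S, x i * x j * (x k + τ k) * (x l + τ l) * (∑ i', x i' * τ i') ^ t ∂μH[d])
        = (∫ x in S, x i * x j * x k * x l * (∑ i', x i' * τ i') ^ t ∂μH[d])
          + ((∫ x in S, τ l * (x i * x j * x k * (∑ i', x i' * τ i') ^ t) ∂μH[d])
          + ((∫ x in S, τ k * (x i * x j * x l * (∑ i', x i' * τ i') ^ t) ∂μH[d])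
          + (∫ x in S, τ k * τ l * (x i * x j * (∑ i', x i' * τ i') ^ t) ∂μH[d]))) := by
    intro i j k l
    have c1 : Continuous fun x : EuclideanSpace ℝ (Fin n) =>
        x i * x j * x k * x l * (∑ i', x i' * τ i') ^ t :=
      ((((contCoord i).mul (contCoord j)).mul (contCoord k)).mul (contCoord l)).mul hPc
    have c2 : Continuous fun x : EuclideanSpace ℝ (Fin n) =>
        τ l * (x i * x j * x k * (∑ i', x i' * τ i') ^ t) :=
      continuous_const.mul ((((contCoord i).mul (contCoord j)).mul (contCoord k)).mul hPc)
    have c3 : Continuous fun x : EuclideanSpace ℝ (Fin n) =>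
        τ k * (x i * x j * x l * (∑ i', x i' * τ i') ^ t) :=
      continuous_const.mul ((((contCoord i).mul (contCoord j)).mul (contCoord l)).mul hPc)
    have c4 : Continuous fun x : EuclideanSpace ℝ (Fin n) =>
        τ k * τ l * (x i * x j * (∑ i', x i' * τ i') ^ t) :=
      continuous_const.mul (((contCoord i).mul (contCoord j)).mul hPc)
    have hfun : (fun x : EuclideanSpace ℝ (Fin n) =>
        x i * x j * (x k + τ k) * (x l + τ l) * (∑ i', x i' * τ i') ^ t)
        = fun x => x i * x j * x k * x l * (∑ i', x i' * τ i') ^ t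
          + (τ l * (x i * x j * x k * (∑ i', x i' * τ i') ^ t)
          + (τ k * (x i * x j * x l * (∑ i', x i' * τ i') ^ t)
          + τ k * τ l * (x i * x j * (∑ i', x i' * τ i') ^ t))) := by
      funext x; ring
    rw [hfun]
    rw [integral_add (hint _ c1) ?h1,
      integral_add (hint _ c2) ?h2,
      integral_add (hint _ c3) (hint _ c4)]
    case h1 => exact hint _ (c2.add (c3.add c4))
    case h2 => exact hint _ (c3.add c4)
  simp only [hsplit]
  simp only [mul_add, Finset.sum_add_distrib]
  -- the three terms that die by antisymmetry
  have hSA : (∑ i, ∑ j, ∑ k, ∑ l, W4 i k j l *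
      ∫ x in S, x i * x j * x k * x l * (∑ i', x i' * τ i') ^ t ∂μH[d]) = 0 := by
    apply sum4_antisym13
    intro i j k l
    have hA : (∫ x in S, x k * x j * x i * x l * (∑ i', x i' * τ i') ^ t ∂μH[d])
        = ∫ x in S, x i * x j * x k * x l * (∑ i', x i' * τ i') ^ t ∂μH[d] :=
      integral_congr_ae (Filter.Eventually.of_forall fun x => by ring)
    rw [hanti1 i k j l, hA]
    ring
  have hSB : (∑ i, ∑ j, ∑ k, ∑ l, W4 i k j l *
      ∫ x in S, τ l * (x i * x j * x k * (∑ i', x i' * τ i') ^ t) ∂μH[d]) = 0 := by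
    apply sum4_antisym13
    intro i j k l
    have hA : (∫ x in S, τ l * (x k * x j * x i * (∑ i', x i' * τ i') ^ t) ∂μH[d])
        = ∫ x in S, τ l * (x i * x j * x k * (∑ i', x i' * τ i') ^ t) ∂μH[d] :=
      integral_congr_ae (Filter.Eventually.of_forall fun x => by ring)
    rw [hanti1 i k j l, hA]
    ring
  have hSC : (∑ i, ∑ j, ∑ k, ∑ l, W4 i k j l *
      ∫ x in S, τ k * (x i * x j * x l * (∑ i', x i' * τ i') ^ t) ∂μH[d]) = 0 := by
    apply sum4_antisym24
    intro i j k l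
    have hA : (∫ x in S, τ k * (x i * x l * x j * (∑ i', x i' * τ i') ^ t) ∂μH[d])
        = ∫ x in S, τ k * (x i * x j * x l * (∑ i', x i' * τ i') ^ t) ∂μH[d] :=
      integral_congr_ae (Filter.Eventually.of_forall fun x => by ring)
    rw [hanti2 i k j l, hA]
    ring
  rw [hSA, hSB, hSC, zero_add, zero_add, zero_add]
  -- the remaining term
  set T : Fin n → Fin n → ℝ := fun i j => ∑ k, ∑ l, W4 i k j l * τ k * τ l with hT
  set I2 : Fin n → Fin n → ℝ :=
    fun i j => ∫ x in S, x i * x j * (∑ i', x i' * τ i') ^ t ∂μH[d] with hI2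
  have hSD : (∑ i, ∑ j, ∑ k, ∑ l, W4 i k j l *
      ∫ x in S, τ k * τ l * (x i * x j * (∑ i', x i' * τ i') ^ t) ∂μH[d])
      = ∑ i, ∑ j, T i j * I2 i j := by
    apply Finset.sum_congr rfl; intro i _
    apply Finset.sum_congr rfl; intro j _
    have hiv : ∀ k l : Fin n,
        (∫ x in S, τ k * τ l * (x i * x j * (∑ i', x i' * τ i') ^ t) ∂μH[d])
          = τ k * τ l * I2 i j := fun k l => integral_const_mul _ _
    calc ∑ k, ∑ l, W4 i k j l *
          ∫ x in S, τ k * τ l * (x i * x j * (∑ i', x i' * τ i') ^ t) ∂μH[d]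
        = ∑ k, ∑ l, W4 i k j l * (τ k * τ l * I2 i j) := by
          apply Finset.sum_congr rfl; intro k _
          apply Finset.sum_congr rfl; intro l _
          rw [hiv k l]
      _ = T i j * I2 i j := by
          rw [hT, Finset.sum_mul]
          apply Finset.sum_congr rfl; intro k _
          rw [Finset.sum_mul]
          apply Finset.sum_congr rfl; intro l _
          ring
  rw [hSD]
  -- now show `∑ i, ∑ j, T i j * I2 i j = 0`
  rcases eq_or_ne τ 0 with rfl | hτ
  · have hT0 : ∀ i j, T i j = 0 := by
      intro i j
      rw [hT]
      apply Finset.sum_eq_zero; intro k _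
      apply Finset.sum_eq_zero; intro l _
      show W4 i k j l * (0 : EuclideanSpace ℝ (Fin n)) k * (0 : EuclideanSpace ℝ (Fin n)) l = 0
      simp
    simp only [hT0, zero_mul, Finset.sum_const_zero]
  -- rotation to put τ along the first axis
  have hnorm0 : ‖τ‖ ≠ 0 := norm_ne_zero_iff.mpr hτ
  have h10 : (1 : Fin n) ≠ 0 := by
    intro h
    have h2 : ((1 : Fin n) : ℕ) = ((0 : Fin n) : ℕ) := congrArg Fin.val h
    rw [Fin.val_one'] at h2
    simp at h2
    omega
  have hw : ‖τ‖ = ‖(‖τ‖ • EuclideanSpace.single (0 : Fin n) (1:ℝ) : EuclideanSpace ℝ (Fin n))‖ := by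
    rw [norm_smul, EuclideanSpace.norm_single, norm_norm]
    simp
  set R := Submodule.reflection (ℝ ∙ (τ - ‖τ‖ • EuclideanSpace.single (0 : Fin n) (1:ℝ)))ᗮ with hRdef
  have hR : R τ = ‖τ‖ • EuclideanSpace.single (0 : Fin n) (1:ℝ) := Submodule.reflection_sub hw
  set B : Fin n → Fin n → ℝ := fun p i => R.symm (EuclideanSpace.single p (1:ℝ)) i with hB
  have hdecomp : ∀ (y : EuclideanSpace ℝ (Fin n)) (i : Fin n),
      R.symm y i = ∑ p, y p * B p i := by
    intro y i
    conv_lhs => rw [← euclid_decomp y]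
    rw [map_sum]
    have h1 : ∀ p : Fin n, R.symm (y p • EuclideanSpace.single p (1:ℝ))
        = y p • R.symm (EuclideanSpace.single p (1:ℝ)) := fun p => map_smul _ _ _
    simp only [h1]
    rw [WithLp.ofLp_sum, Finset.sum_apply]
    simp only [PiLp.smul_apply, smul_eq_mul, hB]
  have hinner2 : ∀ y : EuclideanSpace ℝ (Fin n),
      (∑ i', R.symm y i' * τ i') = ‖τ‖ * y 0 := by
    intro y
    rw [← inner_eq_sum]
    have h1 : (inner ℝ (R.symm y) τ : ℝ) = inner ℝ y (R τ) := by
      rw [← R.inner_map_map (R.symm y) τ, R.apply_symm_apply]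
    rw [h1, hR, real_inner_smul_right]
    have h2 : (inner ℝ y (EuclideanSpace.single (0 : Fin n) (1:ℝ)) : ℝ) = y 0 := by
      rw [inner_eq_sum]
      simp [EuclideanSpace.single_apply]
    rw [h2]
  have hBalt : ∀ p i, B p i = R (EuclideanSpace.single i (1:ℝ)) p := by
    intro p i
    have h1 : R.symm (EuclideanSpace.single p (1:ℝ)) i
        = inner ℝ (EuclideanSpace.single i (1:ℝ)) (R.symm (EuclideanSpace.single p (1:ℝ))) := by
      rw [inner_eq_sum]
      simp [EuclideanSpace.single_apply]
    have h2 : (inner ℝ (EuclideanSpace.single i (1:ℝ))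
          (R.symm (EuclideanSpace.single p (1:ℝ))) : ℝ)
        = inner ℝ (R (EuclideanSpace.single i (1:ℝ))) (EuclideanSpace.single p (1:ℝ)) := by
      rw [← R.inner_map_map (EuclideanSpace.single i (1:ℝ))
        (R.symm (EuclideanSpace.single p (1:ℝ))), R.apply_symm_apply]
    have h3 : (inner ℝ (R (EuclideanSpace.single i (1:ℝ)))
          (EuclideanSpace.single p (1:ℝ)) : ℝ)
        = R (EuclideanSpace.single i (1:ℝ)) p := by
      rw [inner_eq_sum]
      simp [EuclideanSpace.single_apply]
    rw [hB]
    show R.symm (EuclideanSpace.single p (1:ℝ)) i = R (EuclideanSpace.single i (1:ℝ)) p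
    rw [h1, h2, h3]
  have horth : ∀ i j, ∑ p, B p i * B p j = if i = j then 1 else 0 := by
    intro i j
    simp only [hBalt]
    rw [← inner_eq_sum (R (EuclideanSpace.single i (1:ℝ))) (R (EuclideanSpace.single j (1:ℝ))),
      R.inner_map_map, inner_eq_sum]
    simp [EuclideanSpace.single_apply]
    by_cases h : i = j
    · simp [h]
    · simp [h]
      exact fun hji => h hji.symm
  have hB0 : ∀ i, B 0 i = ‖τ‖⁻¹ * τ i := by
    intro i
    have h := congrArg R.symm hR
    rw [R.symm_apply_apply, _root_.map_smul] at h
    have h2 : ‖τ‖⁻¹ • τ = R.symm (EuclideanSpace.single (0 : Fin n) (1:ℝ)) := by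
      have h3 := congrArg (fun v : EuclideanSpace ℝ (Fin n) => ‖τ‖⁻¹ • v) h
      simp only [smul_smul, inv_mul_cancel₀ hnorm0, one_smul] at h3
      exact h3
    rw [hB]
    show R.symm (EuclideanSpace.single (0 : Fin n) (1:ℝ)) i = ‖τ‖⁻¹ * τ i
    rw [← h2]
    simp [PiLp.smul_apply]
  set J : Fin n → Fin n → ℝ :=
    fun p q => ∫ x in S, x p * x q * (x 0) ^ t ∂μH[d] with hJ
  set Tp : Fin n → Fin n → ℝ := fun p q => ∑ i, ∑ j, T i j * B p i * B q j with hTp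
  -- T is trace free
  have htraceT : ∑ i, T i i = 0 := by
    calc ∑ i, T i i = ∑ i, ∑ k, ∑ l, W4 i k i l * τ k * τ l := by simp only [hT]
      _ = ∑ l, ∑ k, ∑ i, W4 i k i l * τ k * τ l := sum3_swap13 _
      _ = 0 := Finset.sum_eq_zero fun l _ => Finset.sum_eq_zero fun k _ => by
          have h : ∑ i, W4 i k i l * τ k * τ l = (∑ i, W4 i k i l) * (τ k * τ l) := by
            rw [Finset.sum_mul]
            exact Finset.sum_congr rfl fun i _ => by ring
          rw [h, htrace k l, zero_mul]
  -- T evaluated twice on τ vanishes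
  have hF5 : ∑ i, ∑ j, T i j * τ i * τ j = 0 := by
    calc ∑ i, ∑ j, T i j * τ i * τ j
        = ∑ i, ∑ j, ∑ k, ∑ l, W4 i k j l * τ k * τ l * τ i * τ j := by
          simp only [hT, Finset.sum_mul]
      _ = ∑ i, ∑ k, ∑ j, ∑ l, W4 i k j l * τ k * τ l * τ i * τ j :=
          Finset.sum_congr rfl fun i _ => Finset.sum_comm
      _ = 0 := Finset.sum_eq_zero fun i _ => Finset.sum_eq_zero fun k _ =>
          sum2_antisym _ (fun a b => by rw [hanti2 i k a b]; ring)
  -- Tp is trace free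
  have htraceTp : ∑ p, Tp p p = 0 := by
    calc ∑ p, Tp p p = ∑ p, ∑ i, ∑ j, T i j * B p i * B p j := by simp only [hTp]
      _ = ∑ j, ∑ i, ∑ p, T i j * B p i * B p j := sum3_swap13 _
      _ = ∑ j, ∑ i, T i j * (if i = j then 1 else 0) := by
          apply Finset.sum_congr rfl; intro j _
          apply Finset.sum_congr rfl; intro i _
          calc ∑ p, T i j * B p i * B p j = T i j * ∑ p, B p i * B p j := by
                rw [Finset.mul_sum]
                exact Finset.sum_congr rfl fun p _ => by ring
            _ = T i j * (if i = j then 1 else 0) := by rw [horth]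
      _ = ∑ j, T j j := by
          apply Finset.sum_congr rfl; intro j _
          calc ∑ i, T i j * (if i = j then 1 else 0)
              = ∑ i, (if i = j then T i j else 0) :=
                Finset.sum_congr rfl fun i _ => by by_cases h : i = j <;> simp [h]
            _ = T j j := by rw [Finset.sum_ite_eq' Finset.univ j (fun i => T i j)]; simp
      _ = 0 := htraceT
  -- Tp 0 0 vanishes
  have hTp00 : Tp 0 0 = 0 := by
    calc Tp 0 0 = ∑ i, ∑ j, T i j * B 0 i * B 0 j := by simp only [hTp]
      _ = ∑ i, ∑ j, (‖τ‖⁻¹ * ‖τ‖⁻¹) * (T i j * τ i * τ j) := by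
          apply Finset.sum_congr rfl; intro i _
          apply Finset.sum_congr rfl; intro j _
          rw [hB0 i, hB0 j]; ring
      _ = (‖τ‖⁻¹ * ‖τ‖⁻¹) * ∑ i, ∑ j, T i j * τ i * τ j := by
          rw [Finset.mul_sum]
          exact Finset.sum_congr rfl fun i _ => (Finset.mul_sum _ _ _).symm
      _ = 0 := by rw [hF5, mul_zero]
  -- expansion of the integrals
  have hI : ∀ i j, I2 i j = ∑ p, ∑ q, (B p i * B q j * ‖τ‖ ^ t) * J p q := by
    intro i j
    calc I2 i j
        = ∫ x in S, R.symm x i * R.symm x j * (∑ i', R.symm x i' * τ i') ^ t ∂μH[d] := by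
          simp only [hI2]
          exact (sphere_integral_comp d R.symm
            (fun x => x i * x j * (∑ i', x i' * τ i') ^ t)).symm
      _ = ∫ x in S, ∑ p, ∑ q, (B p i * B q j * ‖τ‖ ^ t) * (x p * x q * (x 0) ^ t) ∂μH[d] := by
          apply integral_congr_ae
          apply Filter.Eventually.of_forall
          intro x
          show R.symm x i * R.symm x j * (∑ i', R.symm x i' * τ i') ^ t = _
          rw [hdecomp x i, hdecomp x j, hinner2 x, mul_pow, Finset.sum_mul_sum, Finset.sum_mul]
          apply Finset.sum_congr rfl; intro p _
          rw [Finset.sum_mul]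
          apply Finset.sum_congr rfl; intro q _
          ring
      _ = ∑ p, ∫ x in S, ∑ q, (B p i * B q j * ‖τ‖ ^ t) * (x p * x q * (x 0) ^ t) ∂μH[d] := by
          apply integral_finset_sum
          intro p _
          apply hint
          apply continuous_finset_sum
          intro q _
          exact continuous_const.mul
            (((contCoord p).mul (contCoord q)).mul ((contCoord 0).pow t))
      _ = ∑ p, ∑ q, ∫ x in S, (B p i * B q j * ‖τ‖ ^ t) * (x p * x q * (x 0) ^ t) ∂μH[d] := by
          apply Finset.sum_congr rfl; intro p _
          apply integral_finset_sum
          intro q _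
          exact hint _ (continuous_const.mul
            (((contCoord p).mul (contCoord q)).mul ((contCoord 0).pow t)))
      _ = ∑ p, ∑ q, (B p i * B q j * ‖τ‖ ^ t) * J p q := by
          apply Finset.sum_congr rfl; intro p _
          apply Finset.sum_congr rfl; intro q _
          simp only [hJ]
          exact integral_const_mul _ _
  -- final computation
  calc ∑ i, ∑ j, T i j * I2 i j
      = ∑ i, ∑ j, ∑ p, ∑ q, T i j * ((B p i * B q j * ‖τ‖ ^ t) * J p q) := by
        apply Finset.sum_congr rfl; intro i _
        apply Finset.sum_congr rfl; intro j _
        rw [hI i j, Finset.mul_sum]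
        apply Finset.sum_congr rfl; intro p _
        rw [Finset.mul_sum]
    _ = ∑ p, ∑ q, ∑ i, ∑ j, T i j * ((B p i * B q j * ‖τ‖ ^ t) * J p q) := sum4_reorder _
    _ = ∑ p, ∑ q, Tp p q * (‖τ‖ ^ t * J p q) := by
        apply Finset.sum_congr rfl; intro p _
        apply Finset.sum_congr rfl; intro q _
        simp only [hTp]
        rw [Finset.sum_mul]
        apply Finset.sum_congr rfl; intro i _
        rw [Finset.sum_mul]
        apply Finset.sum_congr rfl; intro j _
        ring
    _ = ∑ p, Tp p p * (‖τ‖ ^ t * J p p) := Finset.sum_congr rfl fun p _ =>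
        Finset.sum_eq_single p
          (fun q _ hq => by
            have h0 : J p q = 0 := by
              simp only [hJ]
              exact J_offdiag d p q (Ne.symm hq) t
            rw [h0]; ring)
          (fun h => absurd (Finset.mem_univ p) h)
    _ = ∑ p, Tp p p * (‖τ‖ ^ t * J 1 1) := by
        apply Finset.sum_congr rfl; intro p _
        by_cases hp : p = 0
        · rw [hp, hTp00]; ring
        · have hJd : J p p = J 1 1 := by
            simp only [hJ]
            exact J_diag d p 1 hp h10 t
          rw [hJd]
    _ = (∑ p, Tp p p) * (‖τ‖ ^ t * J 1 1) := (Finset.sum_mul _ _ _).symm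
    _ = 0 := by rw [htraceTp, zero_mul]


end
end

section
/- For every x̄ ∈ ℝⁿ, writing r = |x̄|, Σ_{i,j,k=1}^n (∂_k h̄_{ij}(x̄))² = f(r²)² Σ_{i,j,k=1}^n (∂_k H_{ij}(x̄))² + (8 f(r²) f'(r²) + 4 r² f'(r²)²) Σ_{i,j=1}^n H_{ij}(x̄)². -/
open MeasureTheory Real Filter Topology

noncomputable section

namespace Aux14

abbrev E (n : ℕ) := EuclideanSpace ℝ (Fin n)

lemma hasfd_coord (n : ℕ) (k : Fin n) (x : E n) :
    HasFDerivAt (fun y : E n => y k) (EuclideanSpace.proj k : E n →L[ℝ] ℝ) x := by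
  have h : HasFDerivAt (⇑(EuclideanSpace.proj k : E n →L[ℝ] ℝ))
      (EuclideanSpace.proj k : E n →L[ℝ] ℝ) x :=
    (EuclideanSpace.proj k : E n →L[ℝ] ℝ).hasFDerivAt
  convert h using 1
  funext y; rfl

lemma hasfd_Hten (n : ℕ) (W4 : Fin n → Fin n → Fin n → Fin n → ℝ) (i j : Fin n) (x : E n) :
    HasFDerivAt (Hten n W4 i j)
      (∑ k, ∑ l, W4 i k j l • (x k • (EuclideanSpace.proj l : E n →L[ℝ] ℝ)
        + x l • (EuclideanSpace.proj k : E n →L[ℝ] ℝ))) x := by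
  apply HasFDerivAt.fun_sum; intro k _
  apply HasFDerivAt.fun_sum; intro l _
  have h := (((hasfd_coord n k x).mul (hasfd_coord n l x)).const_mul (W4 i k j l))
  simpa [mul_assoc] using h

lemma normsq (n : ℕ) (x : E n) : ‖x‖ ^ 2 = ∑ i, x i ^ 2 := by
  rw [EuclideanSpace.norm_eq, Real.sq_sqrt (by positivity)]
  simp [Real.norm_eq_abs, sq_abs]

lemma hasfd_normsq (n : ℕ) (x : E n) :
    HasFDerivAt (fun y : E n => ∑ i, y i ^ 2)
      (∑ i, (2 * x i) • (EuclideanSpace.proj i : E n →L[ℝ] ℝ)) x := by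
  apply HasFDerivAt.fun_sum; intro i _
  have h := (hasfd_coord n i x).mul (hasfd_coord n i x)
  simpa [sq, two_mul, add_smul, Pi.mul_def] using h

lemma pd_Hten (n : ℕ) (W4 : Fin n → Fin n → Fin n → Fin n → ℝ) (i j m : Fin n) (x : E n) :
    pd n m (Hten n W4 i j) x = ∑ l, (W4 i m j l + W4 i l j m) * x l := by
  have h := (hasfd_Hten n W4 i j x).fderiv
  simp only [pd, h, ContinuousLinearMap.sum_apply, ContinuousLinearMap.smul_apply,
    ContinuousLinearMap.add_apply, PiLp.proj_apply, EuclideanSpace.single_apply,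
    smul_eq_mul]
  have step1 : ∀ k, ∑ l, W4 i k j l * (x k * (if l = m then 1 else 0)
        + x l * (if k = m then 1 else 0))
      = W4 i k j m * x k + (if k = m then 1 else 0) * ∑ l, W4 i k j l * x l := by
    intro k
    have : ∀ l, W4 i k j l * (x k * (if l = m then 1 else 0)
          + x l * (if k = m then 1 else 0))
        = (if l = m then W4 i k j m * x k else 0)
          + (if k = m then 1 else 0) * (W4 i k j l * x l) := by
      intro l
      by_cases hl : l = m <;> by_cases hk : k = m <;> simp [hl, hk] <;> try ring
    rw [Finset.sum_congr rfl fun l _ => this l, Finset.sum_add_distrib]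
    congr 1
    · simp
    · rw [Finset.mul_sum]
  rw [Finset.sum_congr rfl fun k _ => step1 k, Finset.sum_add_distrib]
  have step2 : ∑ k, (if k = m then 1 else 0) * ∑ l, W4 i k j l * x l
      = ∑ l, W4 i m j l * x l := by
    simp [ite_mul, Finset.sum_ite_eq']
  rw [step2, add_comm, ← Finset.sum_add_distrib]
  exact Finset.sum_congr rfl fun l _ => by ring

lemma pd_hbar (n : ℕ) (W4 : Fin n → Fin n → Fin n → Fin n → ℝ) (f : Polynomial ℝ)
    (i j m : Fin n) (x : E n) :
    pd n m (hbar n W4 f i j) x =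
      Polynomial.eval (‖x‖ ^ 2) f * pd n m (Hten n W4 i j) x +
        Polynomial.eval (‖x‖ ^ 2) f.derivative * (2 * x m) * Hten n W4 i j x := by
  have hfun : hbar n W4 f i j =
      fun y : E n => Polynomial.eval (∑ i, y i ^ 2) f * Hten n W4 i j y := by
    funext y; rw [hbar, normsq]
  have hc : HasFDerivAt (fun y : E n => Polynomial.eval (∑ i, y i ^ 2) f)
      (Polynomial.eval (∑ i, x i ^ 2) f.derivative •
        (∑ i, (2 * x i) • (EuclideanSpace.proj i : E n →L[ℝ] ℝ))) x :=
    by have h := (f.hasDerivAt (∑ i, x i ^ 2)).comp_hasFDerivAt x (hasfd_normsq n x); exact h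
  have hH := hasfd_Hten n W4 i j x
  have hmul := hc.mul hH
  rw [hfun, pd, show (fun y : E n => Polynomial.eval (∑ i, y i ^ 2) f * Hten n W4 i j y) =
      (fun y : E n => Polynomial.eval (∑ i, y i ^ 2) f) * Hten n W4 i j from rfl, hmul.fderiv]
  have hHd : (∑ k, ∑ l, W4 i k j l • (x k • (EuclideanSpace.proj l : E n →L[ℝ] ℝ)
        + x l • (EuclideanSpace.proj k : E n →L[ℝ] ℝ))) (EuclideanSpace.single m 1)
      = pd n m (Hten n W4 i j) x := by
    rw [pd, hH.fderiv]
  simp only [ContinuousLinearMap.add_apply, ContinuousLinearMap.smul_apply, smul_eq_mul]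
  rw [hHd]
  have hq : (∑ i, (2 * x i) • (EuclideanSpace.proj i : E n →L[ℝ] ℝ))
      (EuclideanSpace.single m 1) = 2 * x m := by
    simp [EuclideanSpace.single_apply, Finset.sum_ite_eq', mul_ite]
  rw [hq, ← normsq]
  unfold Hten
  ring

lemma euler (n : ℕ) (W4 : Fin n → Fin n → Fin n → Fin n → ℝ) (i j : Fin n) (x : E n) :
    ∑ m, x m * pd n m (Hten n W4 i j) x = 2 * Hten n W4 i j x := by
  simp only [pd_Hten]
  have h1 : ∑ m, x m * (∑ l, (W4 i m j l + W4 i l j m) * x l)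
      = (∑ m, ∑ l, W4 i m j l * x m * x l) + (∑ m, ∑ l, W4 i l j m * x m * x l) := by
    simp only [Finset.mul_sum, ← Finset.sum_add_distrib]
    exact Finset.sum_congr rfl fun m _ => Finset.sum_congr rfl fun l _ => by ring
  rw [h1, two_mul]
  have hA : ∑ m, ∑ l, W4 i m j l * x m * x l = Hten n W4 i j x := rfl
  have hB : (∑ m, ∑ l, W4 i l j m * x m * x l) = Hten n W4 i j x := by
    rw [show Hten n W4 i j x = ∑ k, ∑ l, W4 i k j l * x k * x l from rfl]
    exact (Finset.sum_comm (s := Finset.univ) (t := Finset.univ)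
        (f := fun m l => W4 i l j m * x m * x l)).trans
      (Finset.sum_congr rfl fun a _ => Finset.sum_congr rfl fun b _ => by ring)
  rw [hA, hB]

end Aux14

theorem stmt_14 (n : ℕ) (hn : 2 ≤ n) (W4 : Fin n → Fin n → Fin n → Fin n → ℝ)
    (hanti1 : ∀ i j k l, W4 i j k l = -W4 j i k l)
    (hanti2 : ∀ i j k l, W4 i j k l = -W4 i j l k)
    (hsymm : ∀ i j k l, W4 i j k l = W4 k l i j)
    (hbianchi : ∀ i j k l, W4 i j k l + W4 i k l j + W4 i l j k = 0)
    (htrace : ∀ j k, ∑ i, W4 i j i k = 0)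
    (f : Polynomial ℝ) :
    ∀ x : EuclideanSpace ℝ (Fin n),
      (∑ i, ∑ j, ∑ k, (pd n k (hbar n W4 f i j) x) ^ 2) =
        Polynomial.eval (‖x‖ ^ 2) f ^ 2 *
            (∑ i, ∑ j, ∑ k, (pd n k (Hten n W4 i j) x) ^ 2) +
          (8 * Polynomial.eval (‖x‖ ^ 2) f * Polynomial.eval (‖x‖ ^ 2) f.derivative +
              4 * ‖x‖ ^ 2 * Polynomial.eval (‖x‖ ^ 2) f.derivative ^ 2) *
            (∑ i, ∑ j, (Hten n W4 i j x) ^ 2) := by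
  intro x
  set F := Polynomial.eval (‖x‖ ^ 2) f with hF
  set F' := Polynomial.eval (‖x‖ ^ 2) f.derivative with hF'
  have key : ∀ i j, ∑ m, (pd n m (hbar n W4 f i j) x) ^ 2 =
      F ^ 2 * (∑ m, (pd n m (Hten n W4 i j) x) ^ 2) +
        (8 * F * F' + 4 * ‖x‖ ^ 2 * F' ^ 2) * (Hten n W4 i j x) ^ 2 := by
    intro i j
    have expand : ∑ m, (pd n m (hbar n W4 f i j) x) ^ 2 =
        F ^ 2 * (∑ m, (pd n m (Hten n W4 i j) x) ^ 2) +
          4 * F * F' * Hten n W4 i j x * (∑ m, x m * pd n m (Hten n W4 i j) x) +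
          4 * F' ^ 2 * (Hten n W4 i j x) ^ 2 * (∑ m, x m ^ 2) := by
      simp only [Aux14.pd_hbar, Finset.mul_sum, ← Finset.sum_add_distrib]
      exact Finset.sum_congr rfl fun m _ => by ring
    rw [expand, Aux14.euler, Aux14.normsq n x]
    ring
  simp only [key]
  simp only [Finset.sum_add_distrib, Finset.mul_sum]


end
end

section
/- For every integer m with 0 ≤ m ≤ 2d₀ + 1 there exist functions G_{1,m}, G_{2,m}, G_{3,m} : [0,∞) → ℝ such that for all x̄ ∈ ℝⁿ, writing r = |x̄|, Σ_{i,j,k=1}^n Δ^m[(∂_k h̄_{ij})²](x̄) = G_{1,m}(r) Σ_{i,j,k=1}^n (∂_k H_{ij}(x̄))² + G_{2,m}(r) Σ_{i,j=1}^n H_{ij}(x̄)² + G_{3,m}(r) |W|², where Δ^m denotes the m-fold iterate of the Euclidean Laplacian on ℝⁿ applied to the function x̄ ↦ Σ_{i,j,k}(∂_k h̄_{ij}(x̄))². -/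
open MeasureTheory Real Filter Topology

noncomputable section

namespace S15

open Polynomial Finset

variable (n : ℕ) (W4 : Fin n → Fin n → Fin n → Fin n → ℝ)

abbrev ES := EuclideanSpace ℝ (Fin n)

/-- coefficient `Wc i j k l = W_{ikjl} + W_{iljk}` -/
def Wc (i j k l : Fin n) : ℝ := W4 i k j l + W4 i l j k

/-- `L_{ijk}(x) = ∂_k H_{ij}` -/
def Lf (i j k : Fin n) (x : ES n) : ℝ := ∑ l, Wc n W4 i j k l * x l

def sN (x : ES n) : ℝ := ∑ i, x i * x i

def Af (x : ES n) : ℝ := ∑ i, ∑ j, ∑ k, Lf n W4 i j k x ^ 2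
def Bf (x : ES n) : ℝ := ∑ i, ∑ j, Hten n W4 i j x ^ 2

def Af1 (k : Fin n) (x : ES n) : ℝ := ∑ i, ∑ j, ∑ q, (2 * Lf n W4 i j q x) * Wc n W4 i j q k
def Bf1 (k : Fin n) (x : ES n) : ℝ := ∑ i, ∑ j, (2 * Hten n W4 i j x) * Lf n W4 i j k x

def proj (k : Fin n) : ES n →L[ℝ] ℝ := EuclideanSpace.proj k

@[simp] lemma proj_apply (k : Fin n) (v : ES n) : proj n k v = v k := rfl

@[simp] lemma proj_single (l k : Fin n) :
    proj n l (EuclideanSpace.single k (1:ℝ)) = if l = k then 1 else 0 := by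
  simp [EuclideanSpace.single_apply]

lemma pd_eq {n : ℕ} {F : ES n → ℝ} {D : ES n →L[ℝ] ℝ} {x : ES n} (h : HasFDerivAt F D x)
    (k : Fin n) : pd n k F x = D (EuclideanSpace.single k 1) := by
  rw [pd, h.fderiv]

lemma hasF_coord (k : Fin n) (x : ES n) :
    HasFDerivAt (fun y : ES n => y k) (proj n k) x := (proj n k).hasFDerivAt

/-! ### first-level derivatives -/

def DL (i j k : Fin n) : ES n →L[ℝ] ℝ := ∑ l, Wc n W4 i j k l • proj n l

lemma hasF_L (i j k : Fin n) (x : ES n) : HasFDerivAt (Lf n W4 i j k) (DL n W4 i j k) x := by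
  unfold Lf DL
  exact HasFDerivAt.fun_sum fun l _ => (hasF_coord n l x).const_mul _

@[simp] lemma DL_single (i j k q : Fin n) :
    DL n W4 i j k (EuclideanSpace.single q 1) = Wc n W4 i j k q := by
  simp [DL, ContinuousLinearMap.sum_apply, mul_ite]

def Ds (x : ES n) : ES n →L[ℝ] ℝ := ∑ l, (2 * x l) • proj n l

lemma hasF_s (x : ES n) : HasFDerivAt (sN n) (Ds n x) x := by
  have h : HasFDerivAt (fun y : ES n => ∑ i, y i * y i)
      (∑ l, (x l • proj n l + x l • proj n l)) x :=
    HasFDerivAt.fun_sum fun l _ => (hasF_coord n l x).mul (hasF_coord n l x)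
  have e2 : (∑ l, (x l • proj n l + x l • proj n l) : ES n →L[ℝ] ℝ) = Ds n x := by
    ext v
    simp only [Ds, ContinuousLinearMap.sum_apply, ContinuousLinearMap.add_apply,
      ContinuousLinearMap.smul_apply, proj_apply, smul_eq_mul]
    exact sum_congr rfl fun l _ => by ring
  rw [show sN n = fun y : ES n => ∑ i, y i * y i from rfl, ← e2]
  exact h

@[simp] lemma Ds_single (x : ES n) (q : Fin n) :
    Ds n x (EuclideanSpace.single q 1) = 2 * x q := by
  simp [Ds, ContinuousLinearMap.sum_apply, mul_ite]

def DH (i j : Fin n) (x : ES n) : ES n →L[ℝ] ℝ := ∑ k, Lf n W4 i j k x • proj n k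

lemma hasF_H (i j : Fin n) (x : ES n) : HasFDerivAt (Hten n W4 i j) (DH n W4 i j x) x := by
  have h : HasFDerivAt (fun y : ES n => ∑ k, ∑ l, W4 i k j l * y k * y l)
      (∑ k, ∑ l, ((W4 i k j l * x k) • proj n l + x l • (W4 i k j l • proj n k))) x := by
    refine HasFDerivAt.fun_sum fun k _ => HasFDerivAt.fun_sum fun l _ => ?_
    exact ((hasF_coord n k x).const_mul _).mul (hasF_coord n l x)
  have e2 : (∑ k, ∑ l, ((W4 i k j l * x k) • proj n l + x l • (W4 i k j l • proj n k))
      : ES n →L[ℝ] ℝ) = DH n W4 i j x := by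
    ext v
    simp only [DH, Lf, Wc, ContinuousLinearMap.sum_apply, ContinuousLinearMap.add_apply,
      ContinuousLinearMap.smul_apply, proj_apply, smul_eq_mul]
    simp only [add_mul, Finset.sum_mul, Finset.sum_add_distrib]
    rw [add_comm]
    refine congrArg₂ (· + ·) ?_ ?_
    · exact sum_congr rfl fun a _ => sum_congr rfl fun b _ => by ring
    · rw [Finset.sum_comm]
  rw [show Hten n W4 i j = fun y : ES n => ∑ k, ∑ l, W4 i k j l * y k * y l from rfl, ← e2]
  exact h

@[simp] lemma DH_single (i j : Fin n) (x : ES n) (q : Fin n) :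
    DH n W4 i j x (EuclideanSpace.single q 1) = Lf n W4 i j q x := by
  simp [DH, ContinuousLinearMap.sum_apply, mul_ite]

lemma pd_H (i j : Fin n) (q : Fin n) (x : ES n) :
    pd n q (Hten n W4 i j) x = Lf n W4 i j q x := by
  rw [pd_eq (hasF_H n W4 i j x) q, DH_single]

lemma hasF_evalP (p : ℝ[X]) (x : ES n) :
    HasFDerivAt (fun y : ES n => eval (sN n y) p)
      (eval (sN n x) (derivative p) • Ds n x) x := by
  have h := (p.hasDerivAt (sN n x)).comp_hasFDerivAt x (hasF_s n x)
  exact h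

def DA (x : ES n) : ES n →L[ℝ] ℝ := ∑ i, ∑ j, ∑ k, (2 * Lf n W4 i j k x) • DL n W4 i j k

lemma hasF_Af (x : ES n) : HasFDerivAt (Af n W4) (DA n W4 x) x := by
  have h : HasFDerivAt (fun y : ES n => ∑ i, ∑ j, ∑ k, Lf n W4 i j k y * Lf n W4 i j k y)
      (∑ i, ∑ j, ∑ k, (Lf n W4 i j k x • DL n W4 i j k + Lf n W4 i j k x • DL n W4 i j k)) x :=
    HasFDerivAt.fun_sum fun i _ => HasFDerivAt.fun_sum fun j _ => HasFDerivAt.fun_sum fun k _ =>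
      (hasF_L n W4 i j k x).mul (hasF_L n W4 i j k x)
  have e1 : Af n W4 = fun y : ES n => ∑ i, ∑ j, ∑ k, Lf n W4 i j k y * Lf n W4 i j k y := by
    funext y; simp [Af, sq]
  have e2 : (∑ i, ∑ j, ∑ k, (Lf n W4 i j k x • DL n W4 i j k + Lf n W4 i j k x • DL n W4 i j k)
      : ES n →L[ℝ] ℝ) = DA n W4 x := by
    ext v
    simp only [DA, ContinuousLinearMap.sum_apply, ContinuousLinearMap.add_apply,
      ContinuousLinearMap.smul_apply, smul_eq_mul]
    exact sum_congr rfl fun i _ => sum_congr rfl fun j _ => sum_congr rfl fun k _ => by ring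
  rw [e1, ← e2]; exact h

@[simp] lemma DA_single (x : ES n) (k : Fin n) :
    DA n W4 x (EuclideanSpace.single k 1) = Af1 n W4 k x := by
  simp [DA, Af1, ContinuousLinearMap.sum_apply]

def DB (x : ES n) : ES n →L[ℝ] ℝ := ∑ i, ∑ j, (2 * Hten n W4 i j x) • DH n W4 i j x

lemma hasF_Bf (x : ES n) : HasFDerivAt (Bf n W4) (DB n W4 x) x := by
  have h : HasFDerivAt (fun y : ES n => ∑ i, ∑ j, Hten n W4 i j y * Hten n W4 i j y)
      (∑ i, ∑ j, (Hten n W4 i j x • DH n W4 i j x + Hten n W4 i j x • DH n W4 i j x)) x :=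
    HasFDerivAt.fun_sum fun i _ => HasFDerivAt.fun_sum fun j _ =>
      (hasF_H n W4 i j x).mul (hasF_H n W4 i j x)
  have e1 : Bf n W4 = fun y : ES n => ∑ i, ∑ j, Hten n W4 i j y * Hten n W4 i j y := by
    funext y; simp [Bf, sq]
  have e2 : (∑ i, ∑ j, (Hten n W4 i j x • DH n W4 i j x + Hten n W4 i j x • DH n W4 i j x)
      : ES n →L[ℝ] ℝ) = DB n W4 x := by
    ext v
    simp only [DB, ContinuousLinearMap.sum_apply, ContinuousLinearMap.add_apply,
      ContinuousLinearMap.smul_apply, smul_eq_mul]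
    exact sum_congr rfl fun i _ => sum_congr rfl fun j _ => by ring
  rw [e1, ← e2]; exact h

@[simp] lemma DB_single (x : ES n) (k : Fin n) :
    DB n W4 x (EuclideanSpace.single k 1) = Bf1 n W4 k x := by
  simp [DB, Bf1, ContinuousLinearMap.sum_apply]

def DA1 (k : Fin n) : ES n →L[ℝ] ℝ := ∑ i, ∑ j, ∑ q, (2 * Wc n W4 i j q k) • DL n W4 i j q

lemma hasF_Af1 (k : Fin n) (x : ES n) : HasFDerivAt (Af1 n W4 k) (DA1 n W4 k) x := by
  have h : HasFDerivAt (fun y : ES n => ∑ i, ∑ j, ∑ q, (2 * Lf n W4 i j q y) * Wc n W4 i j q k)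
      (∑ i, ∑ j, ∑ q, (Wc n W4 i j q k • ((2:ℝ) • DL n W4 i j q))) x :=
    HasFDerivAt.fun_sum fun i _ => HasFDerivAt.fun_sum fun j _ => HasFDerivAt.fun_sum fun q _ =>
      ((hasF_L n W4 i j q x).const_mul 2).mul_const _
  have e2 : (∑ i, ∑ j, ∑ q, (Wc n W4 i j q k • ((2:ℝ) • DL n W4 i j q)) : ES n →L[ℝ] ℝ)
      = DA1 n W4 k := by
    ext v
    simp only [DA1, ContinuousLinearMap.sum_apply, ContinuousLinearMap.smul_apply, smul_eq_mul]
    exact sum_congr rfl fun i _ => sum_congr rfl fun j _ => sum_congr rfl fun q _ => by ring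
  rw [show Af1 n W4 k = fun y : ES n =>
    ∑ i, ∑ j, ∑ q, (2 * Lf n W4 i j q y) * Wc n W4 i j q k from rfl, ← e2]
  exact h

@[simp] lemma DA1_single (k q : Fin n) :
    DA1 n W4 k (EuclideanSpace.single q 1) = ∑ i, ∑ j, ∑ r, (2 * Wc n W4 i j r k) * Wc n W4 i j r q := by
  simp [DA1, ContinuousLinearMap.sum_apply]

def DB1 (k : Fin n) (x : ES n) : ES n →L[ℝ] ℝ :=
  ∑ i, ∑ j, ((2 * Hten n W4 i j x) • DL n W4 i j k + Lf n W4 i j k x • ((2:ℝ) • DH n W4 i j x))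

lemma hasF_Bf1 (k : Fin n) (x : ES n) : HasFDerivAt (Bf1 n W4 k) (DB1 n W4 k x) x := by
  have h : HasFDerivAt (fun y : ES n => ∑ i, ∑ j, (2 * Hten n W4 i j y) * Lf n W4 i j k y)
      (∑ i, ∑ j, ((2 * Hten n W4 i j x) • DL n W4 i j k
        + Lf n W4 i j k x • ((2:ℝ) • DH n W4 i j x))) x :=
    HasFDerivAt.fun_sum fun i _ => HasFDerivAt.fun_sum fun j _ =>
      ((hasF_H n W4 i j x).const_mul 2).mul (hasF_L n W4 i j k x)
  exact h

@[simp] lemma DB1_single (k q : Fin n) (x : ES n) :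
    DB1 n W4 k x (EuclideanSpace.single q 1)
      = ∑ i, ∑ j, ((2 * Hten n W4 i j x) * Wc n W4 i j k q
        + Lf n W4 i j k x * (2 * Lf n W4 i j q x)) := by
  simp [DB1, ContinuousLinearMap.sum_apply]


/-! ### generators -/

def gA (p : ℝ[X]) : ES n → ℝ := fun x => eval (sN n x) p * Af n W4 x
def gB (p : ℝ[X]) : ES n → ℝ := fun x => eval (sN n x) p * Bf n W4 x
def gC (p : ℝ[X]) : ES n → ℝ := fun x => eval (sN n x) p * normWsq n W4

def FA (p : ℝ[X]) (k : Fin n) : ES n → ℝ := fun x =>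
  eval (sN n x) p * Af1 n W4 k x
    + Af n W4 x * (eval (sN n x) (derivative p) * (2 * x k))

def FB (p : ℝ[X]) (k : Fin n) : ES n → ℝ := fun x =>
  eval (sN n x) p * Bf1 n W4 k x
    + Bf n W4 x * (eval (sN n x) (derivative p) * (2 * x k))

def FC (p : ℝ[X]) (k : Fin n) : ES n → ℝ := fun x =>
  normWsq n W4 * (eval (sN n x) (derivative p) * (2 * x k))

def DgA (p : ℝ[X]) (x : ES n) : ES n →L[ℝ] ℝ :=
  eval (sN n x) p • DA n W4 x + Af n W4 x • (eval (sN n x) (derivative p) • Ds n x)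

lemma hasF_gA (p : ℝ[X]) (x : ES n) : HasFDerivAt (gA n W4 p) (DgA n W4 p x) x :=
  (hasF_evalP n p x).mul (hasF_Af n W4 x)

lemma pd_gA (p : ℝ[X]) (k : Fin n) (x : ES n) :
    pd n k (gA n W4 p) x = FA n W4 p k x := by
  rw [pd_eq (hasF_gA n W4 p x) k]
  simp [DgA, FA, ContinuousLinearMap.add_apply, ContinuousLinearMap.smul_apply, smul_eq_mul]

def DgB (p : ℝ[X]) (x : ES n) : ES n →L[ℝ] ℝ :=
  eval (sN n x) p • DB n W4 x + Bf n W4 x • (eval (sN n x) (derivative p) • Ds n x)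

lemma hasF_gB (p : ℝ[X]) (x : ES n) : HasFDerivAt (gB n W4 p) (DgB n W4 p x) x :=
  (hasF_evalP n p x).mul (hasF_Bf n W4 x)

lemma pd_gB (p : ℝ[X]) (k : Fin n) (x : ES n) :
    pd n k (gB n W4 p) x = FB n W4 p k x := by
  rw [pd_eq (hasF_gB n W4 p x) k]
  simp [DgB, FB, ContinuousLinearMap.add_apply, ContinuousLinearMap.smul_apply, smul_eq_mul]

def DgC (p : ℝ[X]) (x : ES n) : ES n →L[ℝ] ℝ :=
  normWsq n W4 • (eval (sN n x) (derivative p) • Ds n x)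

lemma hasF_gC (p : ℝ[X]) (x : ES n) : HasFDerivAt (gC n W4 p) (DgC n W4 p x) x :=
  (hasF_evalP n p x).mul_const _

lemma pd_gC (p : ℝ[X]) (k : Fin n) (x : ES n) :
    pd n k (gC n W4 p) x = FC n W4 p k x := by
  rw [pd_eq (hasF_gC n W4 p x) k]
  simp [DgC, FC, ContinuousLinearMap.smul_apply, smul_eq_mul]
  try ring

/-! ### second-level derivatives -/

def DFA (p : ℝ[X]) (k : Fin n) (x : ES n) : ES n →L[ℝ] ℝ :=
  (eval (sN n x) p • DA1 n W4 k + Af1 n W4 k x • (eval (sN n x) (derivative p) • Ds n x))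
  + (Af n W4 x • (eval (sN n x) (derivative p) • ((2:ℝ) • proj n k)
      + (2 * x k) • (eval (sN n x) (derivative (derivative p)) • Ds n x))
    + (eval (sN n x) (derivative p) * (2 * x k)) • DA n W4 x)

lemma hasF_FA (p : ℝ[X]) (k : Fin n) (x : ES n) :
    HasFDerivAt (FA n W4 p k) (DFA n W4 p k x) x :=
  ((hasF_evalP n p x).mul (hasF_Af1 n W4 k x)).add
    ((hasF_Af n W4 x).mul
      ((hasF_evalP n (derivative p) x).mul ((hasF_coord n k x).const_mul 2)))

lemma pd_FA (p : ℝ[X]) (k : Fin n) (x : ES n) :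
    pd n k (FA n W4 p k) x
      = eval (sN n x) p * (∑ i, ∑ j, ∑ r, (2 * Wc n W4 i j r k) * Wc n W4 i j r k)
        + Af1 n W4 k x * (eval (sN n x) (derivative p) * (2 * x k))
        + Af n W4 x * (eval (sN n x) (derivative p) * 2
            + (2 * x k) * (eval (sN n x) (derivative (derivative p)) * (2 * x k)))
        + eval (sN n x) (derivative p) * (2 * x k) * Af1 n W4 k x := by
  rw [pd_eq (hasF_FA n W4 p k x) k]
  simp [DFA, ContinuousLinearMap.add_apply, ContinuousLinearMap.smul_apply, smul_eq_mul]
  ring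

def DFB (p : ℝ[X]) (k : Fin n) (x : ES n) : ES n →L[ℝ] ℝ :=
  (eval (sN n x) p • DB1 n W4 k x + Bf1 n W4 k x • (eval (sN n x) (derivative p) • Ds n x))
  + (Bf n W4 x • (eval (sN n x) (derivative p) • ((2:ℝ) • proj n k)
      + (2 * x k) • (eval (sN n x) (derivative (derivative p)) • Ds n x))
    + (eval (sN n x) (derivative p) * (2 * x k)) • DB n W4 x)

lemma hasF_FB (p : ℝ[X]) (k : Fin n) (x : ES n) :
    HasFDerivAt (FB n W4 p k) (DFB n W4 p k x) x :=
  ((hasF_evalP n p x).mul (hasF_Bf1 n W4 k x)).add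
    ((hasF_Bf n W4 x).mul
      ((hasF_evalP n (derivative p) x).mul ((hasF_coord n k x).const_mul 2)))

lemma pd_FB (p : ℝ[X]) (k : Fin n) (x : ES n) :
    pd n k (FB n W4 p k) x
      = eval (sN n x) p * (∑ i, ∑ j, ((2 * Hten n W4 i j x) * Wc n W4 i j k k
            + Lf n W4 i j k x * (2 * Lf n W4 i j k x)))
        + Bf1 n W4 k x * (eval (sN n x) (derivative p) * (2 * x k))
        + Bf n W4 x * (eval (sN n x) (derivative p) * 2
            + (2 * x k) * (eval (sN n x) (derivative (derivative p)) * (2 * x k)))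
        + eval (sN n x) (derivative p) * (2 * x k) * Bf1 n W4 k x := by
  rw [pd_eq (hasF_FB n W4 p k x) k]
  simp [DFB, ContinuousLinearMap.add_apply, ContinuousLinearMap.smul_apply, smul_eq_mul]
  ring

def DFC (p : ℝ[X]) (k : Fin n) (x : ES n) : ES n →L[ℝ] ℝ :=
  normWsq n W4 • (eval (sN n x) (derivative p) • ((2:ℝ) • proj n k)
      + (2 * x k) • (eval (sN n x) (derivative (derivative p)) • Ds n x))

lemma hasF_FC (p : ℝ[X]) (k : Fin n) (x : ES n) :
    HasFDerivAt (FC n W4 p k) (DFC n W4 p k x) x :=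
  (((hasF_evalP n (derivative p) x).mul ((hasF_coord n k x).const_mul 2))).const_mul _

lemma pd_FC (p : ℝ[X]) (k : Fin n) (x : ES n) :
    pd n k (FC n W4 p k) x
      = normWsq n W4 * (eval (sN n x) (derivative p) * 2
            + (2 * x k) * (eval (sN n x) (derivative (derivative p)) * (2 * x k))) := by
  rw [pd_eq (hasF_FC n W4 p k x) k]
  simp [DFC, ContinuousLinearMap.add_apply, ContinuousLinearMap.smul_apply, smul_eq_mul]
  ring


/-! ### summation identities -/

lemma I1 (i j : Fin n) (x : ES n) :
    ∑ k, x k * Lf n W4 i j k x = 2 * Hten n W4 i j x := by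
  simp only [Lf, Wc, Finset.mul_sum, add_mul, mul_add, Finset.sum_add_distrib, Hten, two_mul]
  refine congrArg₂ (· + ·) ?_ ?_
  · exact sum_congr rfl fun k _ => sum_congr rfl fun l _ => by ring
  · rw [Finset.sum_comm]
    exact sum_congr rfl fun k _ => sum_congr rfl fun l _ => by ring

lemma sum_x_Af1 (x : ES n) : ∑ k, x k * Af1 n W4 k x = 2 * Af n W4 x := by
  have h : ∑ k, x k * Af1 n W4 k x
      = ∑ i, ∑ j, ∑ q, (2 * Lf n W4 i j q x) * Lf n W4 i j q x := by
    simp only [Af1, Finset.mul_sum]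
    rw [Finset.sum_comm]
    refine sum_congr rfl fun i _ => ?_
    rw [Finset.sum_comm]
    refine sum_congr rfl fun j _ => ?_
    rw [Finset.sum_comm]
    refine sum_congr rfl fun q _ => ?_
    have e : ∀ k ∈ (Finset.univ : Finset (Fin n)),
        x k * ((2 * Lf n W4 i j q x) * Wc n W4 i j q k)
          = (2 * Lf n W4 i j q x) * (Wc n W4 i j q k * x k) := fun k _ => by ring
    rw [Finset.sum_congr rfl e, ← Finset.mul_sum]
    rfl
  rw [h, Af, Finset.mul_sum]
  refine sum_congr rfl fun i _ => ?_
  rw [Finset.mul_sum]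
  refine sum_congr rfl fun j _ => ?_
  rw [Finset.mul_sum]
  exact sum_congr rfl fun q _ => by ring

lemma sum_x_Bf1 (x : ES n) : ∑ k, x k * Bf1 n W4 k x = 4 * Bf n W4 x := by
  have h : ∑ k, x k * Bf1 n W4 k x
      = ∑ i, ∑ j, (2 * Hten n W4 i j x) * (2 * Hten n W4 i j x) := by
    simp only [Bf1, Finset.mul_sum]
    rw [Finset.sum_comm]
    refine sum_congr rfl fun i _ => ?_
    rw [Finset.sum_comm]
    refine sum_congr rfl fun j _ => ?_
    have e : ∀ k ∈ (Finset.univ : Finset (Fin n)),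
        x k * ((2 * Hten n W4 i j x) * Lf n W4 i j k x)
          = (2 * Hten n W4 i j x) * (x k * Lf n W4 i j k x) := fun k _ => by ring
    rw [Finset.sum_congr rfl e, ← Finset.mul_sum, I1]
  rw [h, Bf, Finset.mul_sum]
  refine sum_congr rfl fun i _ => ?_
  rw [Finset.mul_sum]
  exact sum_congr rfl fun j _ => by ring

lemma sum_T :
    ∑ k, (∑ i, ∑ j, ∑ r, (2 * Wc n W4 i j r k) * Wc n W4 i j r k) = 2 * normWsq n W4 := by
  rw [Finset.sum_comm]
  rw [normWsq, Finset.mul_sum]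
  refine sum_congr rfl fun i _ => ?_
  rw [Finset.sum_comm, Finset.mul_sum]
  refine sum_congr rfl fun j _ => ?_
  rw [Finset.sum_comm, Finset.mul_sum]
  refine sum_congr rfl fun r _ => ?_
  rw [Finset.mul_sum]
  refine sum_congr rfl fun k _ => ?_
  show (2 * Wc n W4 i j r k) * Wc n W4 i j r k = 2 * (W4 i r j k + W4 i k j r)^2
  rw [Wc]
  ring

lemma traceWc (hanti1 : ∀ i j k l, W4 i j k l = -W4 j i k l)
    (hanti2 : ∀ i j k l, W4 i j k l = -W4 i j l k)
    (htrace : ∀ j k, ∑ i, W4 i j i k = 0) (i j : Fin n) :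
    ∑ k, Wc n W4 i j k k = 0 := by
  have e : ∀ k ∈ (Finset.univ : Finset (Fin n)),
      Wc n W4 i j k k = 2 * W4 k i k j := by
    intro k _
    rw [Wc]
    rw [hanti1 i k j k, hanti2 k i j k]
    ring
  rw [Finset.sum_congr rfl e, ← Finset.mul_sum, htrace i j, mul_zero]

lemma sum_TB (hanti1 : ∀ i j k l, W4 i j k l = -W4 j i k l)
    (hanti2 : ∀ i j k l, W4 i j k l = -W4 i j l k)
    (htrace : ∀ j k, ∑ i, W4 i j i k = 0) (x : ES n) :
    ∑ k, (∑ i, ∑ j, (2 * Hten n W4 i j x) * Wc n W4 i j k k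
        + ∑ i, ∑ j, Lf n W4 i j k x * (2 * Lf n W4 i j k x)) = 2 * Af n W4 x := by
  simp only [Finset.sum_add_distrib]
  have h1 : ∑ k, ∑ i, ∑ j, ((2 * Hten n W4 i j x) * Wc n W4 i j k k) = 0 := by
    rw [Finset.sum_comm]
    refine Finset.sum_eq_zero fun i _ => ?_
    rw [Finset.sum_comm]
    refine Finset.sum_eq_zero fun j _ => ?_
    rw [← Finset.mul_sum, traceWc n W4 hanti1 hanti2 htrace i j, mul_zero]
  have h2 : ∑ k, ∑ i, ∑ j, (Lf n W4 i j k x * (2 * Lf n W4 i j k x)) = 2 * Af n W4 x := by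
    rw [Finset.sum_comm, Af, Finset.mul_sum]
    refine sum_congr rfl fun i _ => ?_
    rw [Finset.sum_comm, Finset.mul_sum]
    refine sum_congr rfl fun j _ => ?_
    rw [Finset.mul_sum]
    exact sum_congr rfl fun k _ => by ring
  rw [h1, h2, zero_add]

lemma sum_x_sq (x : ES n) : ∑ k, x k * x k = sN n x := rfl

lemma sum_one' : ∑ _k : Fin n, (1:ℝ) = (n:ℝ) := by simp


/-! ### Laplacian formulas -/

lemma lapl_gA (p : ℝ[X]) (x : ES n) :
    lapl n (gA n W4 p) x
      = gA n W4 (C 4 * X * derivative (derivative p) + C (2*(n:ℝ)+8) * derivative p) x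
        + gC n W4 (C 2 * p) x := by
  simp only [lapl]
  have hfun : ∀ k, pd n k (gA n W4 p) = FA n W4 p k := fun k => funext fun y => pd_gA n W4 p k y
  have e : ∀ k ∈ (Finset.univ : Finset (Fin n)),
      pd n k (pd n k (gA n W4 p)) x
        = eval (sN n x) p * (∑ i, ∑ j, ∑ r, (2 * Wc n W4 i j r k) * Wc n W4 i j r k)
          + (4 * eval (sN n x) (derivative p)) * (x k * Af1 n W4 k x)
          + (2 * eval (sN n x) (derivative p) * Af n W4 x) * 1
          + (4 * eval (sN n x) (derivative (derivative p)) * Af n W4 x) * (x k * x k) := by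
    intro k _
    rw [hfun k, pd_FA]
    ring
  rw [Finset.sum_congr rfl e]
  simp only [Finset.sum_add_distrib]
  rw [← Finset.mul_sum, ← Finset.mul_sum, ← Finset.mul_sum, ← Finset.mul_sum]
  rw [sum_T, sum_x_Af1, sum_x_sq, sum_one']
  simp only [gA, gC, eval_add, eval_mul, eval_C, eval_X]
  ring

lemma lapl_gB (hanti1 : ∀ i j k l, W4 i j k l = -W4 j i k l)
    (hanti2 : ∀ i j k l, W4 i j k l = -W4 i j l k)
    (htrace : ∀ j k, ∑ i, W4 i j i k = 0) (p : ℝ[X]) (x : ES n) :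
    lapl n (gB n W4 p) x
      = gB n W4 (C 4 * X * derivative (derivative p) + C (2*(n:ℝ)+16) * derivative p) x
        + gA n W4 (C 2 * p) x := by
  simp only [lapl]
  have hfun : ∀ k, pd n k (gB n W4 p) = FB n W4 p k := fun k => funext fun y => pd_gB n W4 p k y
  have e : ∀ k ∈ (Finset.univ : Finset (Fin n)),
      pd n k (pd n k (gB n W4 p)) x
        = eval (sN n x) p * (∑ i, ∑ j, ((2 * Hten n W4 i j x) * Wc n W4 i j k k
            + Lf n W4 i j k x * (2 * Lf n W4 i j k x)))
          + (4 * eval (sN n x) (derivative p)) * (x k * Bf1 n W4 k x)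
          + (2 * eval (sN n x) (derivative p) * Bf n W4 x) * 1
          + (4 * eval (sN n x) (derivative (derivative p)) * Bf n W4 x) * (x k * x k) := by
    intro k _
    rw [hfun k, pd_FB]
    ring
  rw [Finset.sum_congr rfl e]
  simp only [Finset.sum_add_distrib]
  rw [← Finset.mul_sum, ← Finset.mul_sum, ← Finset.mul_sum, ← Finset.mul_sum]
  rw [sum_TB n W4 hanti1 hanti2 htrace, sum_x_Bf1, sum_x_sq, sum_one']
  simp only [gA, gB, eval_add, eval_mul, eval_C, eval_X]
  ring

lemma lapl_gC (p : ℝ[X]) (x : ES n) :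
    lapl n (gC n W4 p) x
      = gC n W4 (C 4 * X * derivative (derivative p) + C (2*(n:ℝ)) * derivative p) x := by
  simp only [lapl]
  have hfun : ∀ k, pd n k (gC n W4 p) = FC n W4 p k := fun k => funext fun y => pd_gC n W4 p k y
  have e : ∀ k ∈ (Finset.univ : Finset (Fin n)),
      pd n k (pd n k (gC n W4 p)) x
        = (2 * eval (sN n x) (derivative p) * normWsq n W4) * 1
          + (4 * eval (sN n x) (derivative (derivative p)) * normWsq n W4) * (x k * x k) := by
    intro k _
    rw [hfun k, pd_FC]
    ring
  rw [Finset.sum_congr rfl e]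
  simp only [Finset.sum_add_distrib]
  rw [← Finset.mul_sum, ← Finset.mul_sum]
  rw [sum_x_sq, sum_one']
  simp only [gC, eval_add, eval_mul, eval_C, eval_X]
  ring

lemma lapl_trip (p q c : ℝ[X]) (x : ES n) :
    lapl n (fun y => gA n W4 p y + gB n W4 q y + gC n W4 c y) x
      = lapl n (gA n W4 p) x + lapl n (gB n W4 q) x + lapl n (gC n W4 c) x := by
  have pd_trip : ∀ k, pd n k (fun y => gA n W4 p y + gB n W4 q y + gC n W4 c y)
      = fun y => FA n W4 p k y + FB n W4 q k y + FC n W4 c k y := by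
    intro k
    funext y
    have h : HasFDerivAt (fun y => gA n W4 p y + gB n W4 q y + gC n W4 c y)
        (DgA n W4 p y + DgB n W4 q y + DgC n W4 c y) y :=
      ((hasF_gA n W4 p y).add (hasF_gB n W4 q y)).add (hasF_gC n W4 c y)
    rw [pd_eq h k]
    simp only [ContinuousLinearMap.add_apply]
    rw [← pd_eq (hasF_gA n W4 p y) k, ← pd_eq (hasF_gB n W4 q y) k,
      ← pd_eq (hasF_gC n W4 c y) k, pd_gA, pd_gB, pd_gC]
  simp only [lapl]
  rw [← Finset.sum_add_distrib, ← Finset.sum_add_distrib]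
  refine sum_congr rfl fun k _ => ?_
  rw [pd_trip k]
  have hA : pd n k (gA n W4 p) = FA n W4 p k := funext fun y => pd_gA n W4 p k y
  have hB : pd n k (gB n W4 q) = FB n W4 q k := funext fun y => pd_gB n W4 q k y
  have hC : pd n k (gC n W4 c) = FC n W4 c k := funext fun y => pd_gC n W4 c k y
  rw [hA, hB, hC]
  have h : HasFDerivAt (fun y => FA n W4 p k y + FB n W4 q k y + FC n W4 c k y)
      (DFA n W4 p k x + DFB n W4 q k x + DFC n W4 c k x) x :=
    ((hasF_FA n W4 p k x).add (hasF_FB n W4 q k x)).add (hasF_FC n W4 c k x)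
  rw [pd_eq h k, pd_eq (hasF_FA n W4 p k x) k, pd_eq (hasF_FB n W4 q k x) k,
    pd_eq (hasF_FC n W4 c k x) k]
  simp only [ContinuousLinearMap.add_apply]

/-! ### base case -/

lemma norm_sq_eq (x : ES n) : ‖x‖ ^ 2 = sN n x := by
  rw [EuclideanSpace.norm_eq, Real.sq_sqrt (by positivity)]
  simp [sN, Real.norm_eq_abs, sq, abs_mul_abs_self]

def gHf (f : ℝ[X]) (i j : Fin n) : ES n → ℝ := fun x => eval (sN n x) f * Hten n W4 i j x

lemma hbar_eq (f : ℝ[X]) (i j : Fin n) : hbar n W4 f i j = gHf n W4 f i j := by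
  funext x
  rw [hbar, gHf, norm_sq_eq]

def DgH (f : ℝ[X]) (i j : Fin n) (x : ES n) : ES n →L[ℝ] ℝ :=
  eval (sN n x) f • DH n W4 i j x + Hten n W4 i j x • (eval (sN n x) (derivative f) • Ds n x)

lemma hasF_gH (f : ℝ[X]) (i j : Fin n) (x : ES n) :
    HasFDerivAt (gHf n W4 f i j) (DgH n W4 f i j x) x :=
  (hasF_evalP n f x).mul (hasF_H n W4 i j x)

lemma pd_gH (f : ℝ[X]) (i j k : Fin n) (x : ES n) :
    pd n k (gHf n W4 f i j) x
      = eval (sN n x) f * Lf n W4 i j k x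
        + Hten n W4 i j x * (eval (sN n x) (derivative f) * (2 * x k)) := by
  rw [pd_eq (hasF_gH n W4 f i j x) k]
  simp [DgH, ContinuousLinearMap.add_apply, ContinuousLinearMap.smul_apply, smul_eq_mul]

lemma base (f : ℝ[X]) :
    (fun y => ∑ i, ∑ j, ∑ k, (pd n k (hbar n W4 f i j) y) ^ 2)
      = fun x => gA n W4 (f ^ 2) x
          + gB n W4 (C 4 * X * (derivative f) ^ 2 + C 8 * f * derivative f) x
          + gC n W4 0 x := by
  funext x
  have inner : ∀ i j, ∑ k, (pd n k (hbar n W4 f i j) x) ^ 2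
      = (eval (sN n x) f * eval (sN n x) f) * (∑ k, Lf n W4 i j k x ^ 2)
        + (8 * eval (sN n x) f * eval (sN n x) (derivative f)
            + 4 * eval (sN n x) (derivative f) * eval (sN n x) (derivative f) * sN n x)
          * Hten n W4 i j x ^ 2 := by
    intro i j
    have e : ∀ k ∈ (Finset.univ : Finset (Fin n)),
        (pd n k (hbar n W4 f i j) x) ^ 2
          = (eval (sN n x) f * eval (sN n x) f) * (Lf n W4 i j k x ^ 2)
            + (4 * eval (sN n x) f * eval (sN n x) (derivative f) * Hten n W4 i j x)
              * (x k * Lf n W4 i j k x)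
            + (4 * eval (sN n x) (derivative f) * eval (sN n x) (derivative f)
                * Hten n W4 i j x ^ 2) * (x k * x k) := by
      intro k _
      rw [hbar_eq, pd_gH]
      ring
    rw [Finset.sum_congr rfl e]
    simp only [Finset.sum_add_distrib]
    rw [← Finset.mul_sum, ← Finset.mul_sum, ← Finset.mul_sum]
    rw [I1, sum_x_sq]
    ring
  rw [Finset.sum_congr rfl fun i _ => Finset.sum_congr rfl fun j _ => inner i j]
  simp only [Finset.sum_add_distrib]
  have h1 : ∑ i, ∑ j, ((eval (sN n x) f * eval (sN n x) f) * (∑ k, Lf n W4 i j k x ^ 2))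
      = (eval (sN n x) f * eval (sN n x) f) * Af n W4 x := by
    rw [Af, Finset.mul_sum]
    exact sum_congr rfl fun i _ => by rw [Finset.mul_sum]
  have h2 : ∑ i, ∑ j, ((8 * eval (sN n x) f * eval (sN n x) (derivative f)
        + 4 * eval (sN n x) (derivative f) * eval (sN n x) (derivative f) * sN n x)
          * Hten n W4 i j x ^ 2)
      = (8 * eval (sN n x) f * eval (sN n x) (derivative f)
        + 4 * eval (sN n x) (derivative f) * eval (sN n x) (derivative f) * sN n x)
          * Bf n W4 x := by
    rw [Bf, Finset.mul_sum]
    exact sum_congr rfl fun i _ => by rw [Finset.mul_sum]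
  rw [h1, h2]
  simp only [gA, gB, gC, eval_add, eval_mul, eval_pow, eval_C, eval_X, eval_zero]
  ring

end S15


theorem stmt_15 (n : ℕ) (hn : 2 ≤ n) (W4 : Fin n → Fin n → Fin n → Fin n → ℝ)
    (hanti1 : ∀ i j k l, W4 i j k l = -W4 j i k l)
    (hanti2 : ∀ i j k l, W4 i j k l = -W4 i j l k)
    (hsymm : ∀ i j k l, W4 i j k l = W4 k l i j)
    (hbianchi : ∀ i j k l, W4 i j k l + W4 i k l j + W4 i l j k = 0)
    (htrace : ∀ j k, ∑ i, W4 i j i k = 0)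
    (d₀ : ℕ) (hd₀ : 1 ≤ d₀ ∧ d₀ ≤ 4) (f : Polynomial ℝ) (hf : f.natDegree = d₀) :
    ∀ m : ℕ, m ≤ 2 * d₀ + 1 →
      ∃ G₁ G₂ G₃ : ℝ → ℝ,
        ∀ x : EuclideanSpace ℝ (Fin n),
          (lapl n)^[m]
              (fun y => ∑ i, ∑ j, ∑ k, (pd n k (hbar n W4 f i j) y) ^ 2) x =
            G₁ ‖x‖ * (∑ i, ∑ j, ∑ k, (pd n k (Hten n W4 i j) x) ^ 2) +
              G₂ ‖x‖ * (∑ i, ∑ j, (Hten n W4 i j x) ^ 2) +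
              G₃ ‖x‖ * normWsq n W4 := by
  intro m hm
  clear hm hn hsymm hbianchi hf hd₀
  obtain ⟨p, q, c, hPQ⟩ :
      ∃ p q c : Polynomial ℝ,
        (lapl n)^[m] (fun y => ∑ i, ∑ j, ∑ k, (pd n k (hbar n W4 f i j) y) ^ 2)
          = fun x => S15.gA n W4 p x + S15.gB n W4 q x + S15.gC n W4 c x := by
    induction m with
    | zero =>
      refine ⟨f ^ 2, Polynomial.C 4 * Polynomial.X * (Polynomial.derivative f) ^ 2
        + Polynomial.C 8 * f * Polynomial.derivative f, 0, ?_⟩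
      simpa using S15.base n W4 f
    | succ m ih =>
      obtain ⟨p, q, c, h⟩ := ih
      refine ⟨Polynomial.C 4 * Polynomial.X * (Polynomial.derivative (Polynomial.derivative p))
          + Polynomial.C (2*(n:ℝ)+8) * Polynomial.derivative p + Polynomial.C 2 * q,
        Polynomial.C 4 * Polynomial.X * (Polynomial.derivative (Polynomial.derivative q))
          + Polynomial.C (2*(n:ℝ)+16) * Polynomial.derivative q,
        Polynomial.C 4 * Polynomial.X * (Polynomial.derivative (Polynomial.derivative c))
          + Polynomial.C (2*(n:ℝ)) * Polynomial.derivative c + Polynomial.C 2 * p, ?_⟩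
      rw [Function.iterate_succ_apply', h]
      funext x
      rw [S15.lapl_trip, S15.lapl_gA, S15.lapl_gB n W4 hanti1 hanti2 htrace, S15.lapl_gC]
      simp only [S15.gA, S15.gB, S15.gC, Polynomial.eval_add, Polynomial.eval_mul,
        Polynomial.eval_C, Polynomial.eval_X]
      ring
  refine ⟨fun r => Polynomial.eval (r^2) p, fun r => Polynomial.eval (r^2) q,
    fun r => Polynomial.eval (r^2) c, fun x => ?_⟩
  rw [hPQ]
  have hA : (∑ i, ∑ j, ∑ k, (pd n k (Hten n W4 i j) x)^2) = S15.Af n W4 x :=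
    Finset.sum_congr rfl fun i _ => Finset.sum_congr rfl fun j _ =>
      Finset.sum_congr rfl fun k _ => by rw [S15.pd_H]
  rw [hA]
  simp only [S15.gA, S15.gB, S15.gC, S15.norm_sq_eq, S15.Bf]

end
end
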